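/- arXiv:1502.02240 — 6 statements merged into one kernel-verified Lean document; each statement's English description precedes it below -/
import Mathlib

section
/- Let K be a field of positive characteristic and let γ be a discrete norm on K. Let U ≤ GL_n(K) denote the group of unipotent upper triangular matrices. Then the family {F\GL_n(K)}_F, where F ranges over all finite subgroups of U, has finite asymptotic dimension uniformly with respect to the pseudometric associated to γ. -/
open Matrix

/-- `d` is a pseudometric on `X`. -/
structure IsPseudoMetric {X : Type} (d : X → X → ℝ) : Prop where
  nonneg : ∀ x y, 0 ≤ d x y
  refl : ∀ x, d x x = 0
  symm : ∀ x y, d x y = d y x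
  triangle : ∀ x y z, d x z ≤ d x y + d y z

/-- A (pseudo)metric on a group is left-invariant if left translations are isometries. -/
def IsLeftInvariant {G : Type} [Group G] (d : G → G → ℝ) : Prop :=
  ∀ g x y : G, d (g * x) (g * y) = d x y

/-- A (pseudo)metric is proper if all balls are finite. -/
def IsProper {X : Type} (d : X → X → ℝ) : Prop :=
  ∀ (x : X) (R : ℝ), {y : X | d x y ≤ R}.Finite

/-- The quotient pseudometric on `F\G`, realized as the pseudometric
`d(Fg, Fg') = inf_{f ∈ F} d(f*g, g')` on `G` itself. -/
noncomputable def quotDist {G : Type} [Group G] (d : G → G → ℝ) (F : Subgroup G)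
    (x y : G) : ℝ :=
  ⨅ f : F, d ((f : G) * x) y

/-- A family of (pseudo)metric spaces `{(X i, d i)}` has asymptotic dimension at most `n`
uniformly: for every `r > 0` there is a uniform bound `B` such that every `X i` is covered
by `n+1` collections of subsets, each collection `r`-disjoint, all members of diameter
at most `B`. -/
def UniformAsdimLE {ι : Type} (X : ι → Type) (d : ∀ i, X i → X i → ℝ) (n : ℕ) : Prop :=
  ∀ r : ℝ, 0 < r → ∃ B : ℝ, ∀ i : ι,
    ∃ 𝒰 : Fin (n + 1) → Set (Set (X i)),
      (∀ x : X i, ∃ k, ∃ U ∈ 𝒰 k, x ∈ U) ∧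
      (∀ k, ∀ U ∈ 𝒰 k, ∀ V ∈ 𝒰 k, U ≠ V → ∀ x ∈ U, ∀ y ∈ V, r < d i x y) ∧
      (∀ k, ∀ U ∈ 𝒰 k, ∀ x ∈ U, ∀ y ∈ U, d i x y ≤ B)

/-- A family of (pseudo)metric spaces has finite asymptotic dimension uniformly. -/
def UniformFinAsdim {ι : Type} (X : ι → Type) (d : ∀ i, X i → X i → ℝ) : Prop :=
  ∃ n : ℕ, UniformAsdimLE X d n

/-- A discrete norm on a field `K`: multiplicative, ultrametric, vanishing exactly at `0`,
whose range on `K \ {0}` is a discrete subgroup of the multiplicative group `(0,∞)`. -/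
structure IsDiscreteNorm {K : Type} [Field K] (γ : K → ℝ) : Prop where
  nonneg : ∀ x, 0 ≤ γ x
  eq_zero_iff : ∀ x, γ x = 0 ↔ x = 0
  map_mul : ∀ x y, γ (x * y) = γ x * γ y
  ultrametric : ∀ x y, γ (x + y) ≤ max (γ x) (γ y)
  discrete : DiscreteTopology {r : ℝ // ∃ x : K, x ≠ 0 ∧ γ x = r}

/-- The length function `l_γ(g) = log max_{i,j} {γ(g_{ij}), γ(g^{ij})}` on `GL_n(K)`
associated to a norm `γ`, where `g_{ij}` and `g^{ij}` are the matrix coefficients of `g`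
and `g⁻¹` respectively. -/
noncomputable def normLength {K : Type} [Field K] (γ : K → ℝ) {n : ℕ}
    (g : GL (Fin n) K) : ℝ :=
  Real.log (⨆ p : Fin n × Fin n,
    max (γ ((g : Matrix (Fin n) (Fin n) K) p.1 p.2))
        (γ (((g⁻¹ : GL (Fin n) K) : Matrix (Fin n) (Fin n) K) p.1 p.2)))

/-- The pseudometric `d_γ(x,y) = l_γ(x⁻¹y)` on `GL_n(K)` associated to a norm `γ`. -/
noncomputable def normDist {K : Type} [Field K] (γ : K → ℝ) {n : ℕ}
    (x y : GL (Fin n) K) : ℝ :=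
  normLength γ (x⁻¹ * y)

namespace AsdimAux

variable {K : Type} [Field K] {γ : K → ℝ} {n : ℕ}

lemma g0 (hγ : IsDiscreteNorm γ) : γ 0 = 0 := (hγ.eq_zero_iff 0).2 rfl

lemma gpos (hγ : IsDiscreteNorm γ) {x : K} (hx : x ≠ 0) : 0 < γ x :=
  lt_of_le_of_ne (hγ.nonneg x) (fun h => hx ((hγ.eq_zero_iff x).1 h.symm))

lemma g1 (hγ : IsDiscreteNorm γ) : γ 1 = 1 := by
  have h := hγ.map_mul 1 1
  rw [one_mul] at h
  have h1 : 0 < γ 1 := gpos hγ one_ne_zero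
  nlinarith

lemma gneg (hγ : IsDiscreteNorm γ) (x : K) : γ (-x) = γ x := by
  have h := hγ.map_mul (-1) x
  have h1 : γ (-1) = 1 := by
    have := hγ.map_mul (-1) (-1)
    rw [neg_mul_neg, one_mul, g1 hγ] at this
    have h2 : 0 ≤ γ (-1) := hγ.nonneg _
    nlinarith
  rw [neg_one_mul] at h
  rw [h, h1, one_mul]

lemma ginv (hγ : IsDiscreteNorm γ) {x : K} (hx : x ≠ 0) : γ x⁻¹ = (γ x)⁻¹ := by
  have h := hγ.map_mul x x⁻¹
  rw [mul_inv_cancel₀ hx, g1 hγ] at h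
  have hx' : γ x ≠ 0 := ne_of_gt (gpos hγ hx)
  field_simp at h ⊢
  linarith [h.symm]

lemma gsum (hγ : IsDiscreteNorm γ) {ι : Type*} (s : Finset ι) (f : ι → K) {c : ℝ}
    (hc : 0 ≤ c) (h : ∀ i ∈ s, γ (f i) ≤ c) : γ (∑ i ∈ s, f i) ≤ c := by
  classical
  induction s using Finset.induction_on with
  | empty => simpa [g0 hγ] using hc
  | @insert a s ha ih =>
    rw [Finset.sum_insert ha]
    refine le_trans (hγ.ultrametric _ _) (max_le (h a (Finset.mem_insert_self a s)) ?_)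
    exact ih (fun i hi => h i (Finset.mem_insert_of_mem hi))

variable {n : ℕ}

/-- coercion to matrix -/
def mg (g : GL (Fin n) K) : Matrix (Fin n) (Fin n) K := g

lemma mg_mul (g h : GL (Fin n) K) : mg (g * h) = mg g * mg h := rfl
lemma mg_one : mg (1 : GL (Fin n) K) = 1 := rfl
lemma mg_inv_mul (g : GL (Fin n) K) : mg g⁻¹ * mg g = 1 := Units.inv_mul g
lemma mg_mul_inv (g : GL (Fin n) K) : mg g * mg g⁻¹ = 1 := Units.mul_inv g

/-- upper triangular predicate -/
def UT (M : Matrix (Fin n) (Fin n) K) : Prop := ∀ i j : Fin n, j < i → M i j = 0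

lemma UT_one : UT (1 : Matrix (Fin n) (Fin n) K) := by
  intro i j hij
  exact Matrix.one_apply_ne (ne_of_gt hij)

lemma UT_mul {A B : Matrix (Fin n) (Fin n) K} (hA : UT A) (hB : UT B) : UT (A * B) := by
  intro i j hij
  rw [Matrix.mul_apply]
  apply Finset.sum_eq_zero
  intro l _
  rcases lt_or_ge l i with hl | hl
  · rw [hA i l hl, zero_mul]
  · rw [hB l j (lt_of_lt_of_le hij hl), mul_zero]

lemma det_ne_zero (g : GL (Fin n) K) : (mg g).det ≠ 0 := by
  intro h
  have := congrArg Matrix.det (mg_mul_inv g)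
  rw [Matrix.det_mul, h, zero_mul, Matrix.det_one] at this
  exact zero_ne_one this

lemma UT.blockTriangular {M : Matrix (Fin n) (Fin n) K} (h : UT M) :
    M.BlockTriangular id := fun i j hij => h i j hij

lemma UT_diag_ne_zero {g : GL (Fin n) K} (h : UT (mg g)) (i : Fin n) : mg g i i ≠ 0 := by
  intro h0
  apply det_ne_zero g
  rw [Matrix.det_of_upperTriangular h.blockTriangular]
  exact Finset.prod_eq_zero (Finset.mem_univ i) h0

lemma UT_inv {g : GL (Fin n) K} (h : UT (mg g)) : UT (mg g⁻¹) := by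
  have key : ∀ m : ℕ, ∀ j i : Fin n, (j : ℕ) = m → j < i → mg g⁻¹ i j = 0 := by
    intro m
    induction m using Nat.strong_induction_on with
    | _ m ih =>
      intro j i hj hji
      have h1 : (mg g⁻¹ * mg g) i j = (1 : Matrix (Fin n) (Fin n) K) i j := by
        rw [mg_inv_mul]
      rw [Matrix.mul_apply, Matrix.one_apply_ne (ne_of_gt hji)] at h1
      have h2 : ∑ l, mg g⁻¹ i l * mg g l j = mg g⁻¹ i j * mg g j j := by
        apply Finset.sum_eq_single j
        · intro l _ hl
          rcases lt_or_gt_of_ne hl with hlj | hlj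
          · rw [ih l (by omega) l i rfl (lt_trans hlj hji), zero_mul]
          · rw [h l j hlj, mul_zero]
        · intro hc; exact absurd (Finset.mem_univ j) hc
      rw [h2] at h1
      rcases mul_eq_zero.1 h1 with h3 | h3
      · exact h3
      · exact absurd h3 (UT_diag_ne_zero h j)
  intro i j hij
  exact key j j i rfl hij

lemma diag_inv {g : GL (Fin n) K} (h : UT (mg g)) (i : Fin n) :
    mg g⁻¹ i i = (mg g i i)⁻¹ := by
  have h1 : (mg g⁻¹ * mg g) i i = (1 : Matrix (Fin n) (Fin n) K) i i := by rw [mg_inv_mul]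
  rw [Matrix.mul_apply, Matrix.one_apply_eq] at h1
  have h2 : ∑ l, mg g⁻¹ i l * mg g l i = mg g⁻¹ i i * mg g i i := by
    apply Finset.sum_eq_single i
    · intro l _ hl
      rcases lt_or_gt_of_ne hl with hli | hli
      · rw [UT_inv h i l hli, zero_mul]
      · rw [h l i hli, mul_zero]
    · intro hc; exact absurd (Finset.mem_univ i) hc
  rw [h2] at h1
  exact eq_inv_of_mul_eq_one_left h1

lemma diag_mul {A B : Matrix (Fin n) (Fin n) K} (hA : UT A) (hB : UT B) (i : Fin n) :
    (A * B) i i = A i i * B i i := by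
  rw [Matrix.mul_apply]
  apply Finset.sum_eq_single i
  · intro l _ hl
    rcases lt_or_gt_of_ne hl with hli | hli
    · rw [hA i l hli, zero_mul]
    · rw [hB l i hli, mul_zero]
  · intro hc; exact absurd (Finset.mem_univ i) hc

/-- bound on entries of a matrix product -/
lemma mulBound (hγ : IsDiscreteNorm γ) {A B : Matrix (Fin n) (Fin n) K} {a b : ℝ}
    (ha : 0 ≤ a) (hb : 0 ≤ b) (hA : ∀ i j, γ (A i j) ≤ a) (hB : ∀ i j, γ (B i j) ≤ b) :
    ∀ i j, γ ((A * B) i j) ≤ a * b := by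
  intro i j
  rw [Matrix.mul_apply]
  apply gsum hγ _ _ (mul_nonneg ha hb)
  intro l _
  rw [hγ.map_mul]
  exact mul_le_mul (hA i l) (hB l j) (hγ.nonneg _) ha

/-- entries of g and g⁻¹ bounded by c -/
def EB (γ : K → ℝ) (g : GL (Fin n) K) (c : ℝ) : Prop :=
  ∀ i j, γ (mg g i j) ≤ c ∧ γ (mg g⁻¹ i j) ≤ c

def IsO (γ : K → ℝ) (g : GL (Fin n) K) : Prop := EB γ g 1

lemma IsO_one (hγ : IsDiscreteNorm γ) : IsO γ (1 : GL (Fin n) K) := by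
  have h : ∀ i j : Fin n, γ ((1 : Matrix (Fin n) (Fin n) K) i j) ≤ 1 := by
    intro i j
    rcases eq_or_ne i j with h | h
    · rw [h, Matrix.one_apply_eq, g1 hγ]
    · rw [Matrix.one_apply_ne h, g0 hγ]; norm_num
  intro i j
  refine ⟨h i j, ?_⟩
  rw [inv_one]
  exact h i j

lemma IsO_mul (hγ : IsDiscreteNorm γ) {g h : GL (Fin n) K} (hg : IsO γ g) (hh : IsO γ h) :
    IsO γ (g * h) := by
  intro i j
  constructor
  · rw [mg_mul]
    have := mulBound hγ (zero_le_one) (zero_le_one) (fun i j => (hg i j).1)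
      (fun i j => (hh i j).1) i j
    simpa using this
  · rw [_root_.mul_inv_rev, mg_mul]
    have := mulBound hγ (zero_le_one) (zero_le_one) (fun i j => (hh i j).2)
      (fun i j => (hg i j).2) i j
    simpa using this

lemma IsO_inv {g : GL (Fin n) K} (hg : IsO γ g) : IsO γ g⁻¹ := by
  intro i j
  refine ⟨(hg i j).2, ?_⟩
  rw [inv_inv]
  exact (hg i j).1

/-- sandwich: k * g * k' with k,k' in O -/
lemma sandwich (hγ : IsDiscreteNorm γ) {k k' g : GL (Fin n) K} (hk : IsO γ k)
    (hk' : IsO γ k') {c : ℝ} (hc : 0 ≤ c) (hg : ∀ i j, γ (mg g i j) ≤ c) :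
    ∀ i j, γ (mg (k * g * k') i j) ≤ c := by
  intro i j
  rw [mg_mul, mg_mul]
  have h1 := mulBound hγ zero_le_one hc (fun i j => (hk i j).1) hg
  have h2 := mulBound hγ (by linarith : (0:ℝ) ≤ 1 * c) zero_le_one h1 (fun i j => (hk' i j).1) i j
  simpa using h2

/-- the sup inside normLength -/
noncomputable def nsup (γ : K → ℝ) (g : GL (Fin n) K) : ℝ :=
  ⨆ p : Fin n × Fin n, max (γ (mg g p.1 p.2)) (γ (mg g⁻¹ p.1 p.2))

lemma normLength_eq (g : GL (Fin n) K) : normLength γ g = Real.log (nsup γ g) := rfl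

lemma nsup_nonneg (hγ : IsDiscreteNorm γ) (g : GL (Fin n) K) : 0 ≤ nsup γ g := by
  rcases isEmpty_or_nonempty (Fin n × Fin n) with h | h
  · rw [nsup, iSup, Set.range_eq_empty, Real.sSup_empty]
  · obtain ⟨p⟩ := h
    rw [nsup]
    refine le_trans ?_ (le_ciSup (f := fun p : Fin n × Fin n => max (γ (mg g p.1 p.2)) (γ (mg g⁻¹ p.1 p.2))) (Set.Finite.bddAbove (Set.finite_range _)) p)
    exact le_trans (hγ.nonneg _) (le_max_left _ _)

lemma nl_le (hγ : IsDiscreteNorm γ) {g : GL (Fin n) K} {c : ℝ} (hc : 0 ≤ c)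
    (h : ∀ i j, γ (mg g i j) ≤ Real.exp c ∧ γ (mg g⁻¹ i j) ≤ Real.exp c) :
    normLength γ g ≤ c := by
  have hs : nsup γ g ≤ Real.exp c := by
    apply Real.iSup_le
    · intro p
      exact max_le (h p.1 p.2).1 (h p.1 p.2).2
    · positivity
  rw [normLength_eq]
  rcases lt_or_ge 0 (nsup γ g) with h0 | h0
  · exact (Real.log_le_iff_le_exp h0).2 hs
  · have : nsup γ g = 0 := le_antisymm h0 (nsup_nonneg hγ g)
    rw [this, Real.log_zero]
    exact hc

lemma nl_ge (hγ : IsDiscreteNorm γ) {g : GL (Fin n) K} {c : ℝ}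
    (h : normLength γ g ≤ c) :
    ∀ i j, γ (mg g i j) ≤ Real.exp c ∧ γ (mg g⁻¹ i j) ≤ Real.exp c := by
  intro i j
  have hb : max (γ (mg g i j)) (γ (mg g⁻¹ i j)) ≤ nsup γ g := by
    rw [nsup]
    exact le_ciSup (f := fun p : Fin n × Fin n => max (γ (mg g p.1 p.2)) (γ (mg g⁻¹ p.1 p.2)))
      (Set.Finite.bddAbove (Set.finite_range _)) (i, j)
  rcases lt_or_ge 0 (nsup γ g) with h0 | h0
  · have hs : nsup γ g ≤ Real.exp c := by
      rw [normLength_eq] at h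
      exact (Real.log_le_iff_le_exp h0).1 h
    exact ⟨le_trans (le_trans (le_max_left _ _) hb) hs,
      le_trans (le_trans (le_max_right _ _) hb) hs⟩
  · have h1 : γ (mg g i j) ≤ 0 := le_trans (le_trans (le_max_left _ _) hb) h0
    have h2 : γ (mg g⁻¹ i j) ≤ 0 := le_trans (le_trans (le_max_right _ _) hb) h0
    exact ⟨le_trans h1 (Real.exp_pos c).le, le_trans h2 (Real.exp_pos c).le⟩

/-- partially triangular: rows with index ≥ m are triangular -/
def PT (m : ℕ) (g : GL (Fin n) K) : Prop :=
  ∀ l j : Fin n, j < l → m ≤ (l : ℕ) → mg g l j = 0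

def glMk (A B : Matrix (Fin n) (Fin n) K) (h1 : A * B = 1) (h2 : B * A = 1) :
    GL (Fin n) K := ⟨A, B, h1, h2⟩

lemma mg_glMk (A B : Matrix (Fin n) (Fin n) K) (h1 : A * B = 1) (h2 : B * A = 1) :
    mg (glMk A B h1 h2) = A := rfl

lemma mg_glMk_inv (A B : Matrix (Fin n) (Fin n) K) (h1 : A * B = 1) (h2 : B * A = 1) :
    mg (glMk A B h1 h2)⁻¹ = B := rfl

lemma pivot_exists (g : GL (Fin n) K) (i : Fin n) (h : PT ((i : ℕ) + 1) g) :
    ∃ j₀ : Fin n, j₀ ≤ i ∧ mg g i j₀ ≠ 0 := by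
  by_contra hc
  push_neg at hc
  apply det_ne_zero g
  rw [Matrix.det_apply]
  apply Finset.sum_eq_zero
  intro σ _
  have hz : ∃ j, mg g (σ j) j = 0 := by
    by_contra hσ
    push_neg at hσ
    have key : ∀ j : Fin n, i ≤ σ j → i < j := by
      intro j hj
      rcases eq_or_lt_of_le hj with he | hl
      · by_contra hji
        push_neg at hji
        exact hσ j (by rw [← he]; exact hc j hji)
      · by_contra hji
        push_neg at hji
        have hjl : j < σ j := lt_of_le_of_lt hji hl
        exact hσ j (h (σ j) j hjl hl)
    have hcard : (Finset.Ici i).card ≤ (Finset.Ioi i).card := by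
      apply Finset.card_le_card_of_injOn (fun l => σ.symm l)
      · intro l hl
        rw [Finset.mem_coe, Finset.mem_Ici] at hl
        rw [Finset.mem_coe, Finset.mem_Ioi]
        exact key (σ.symm l) (by rwa [Equiv.apply_symm_apply])
      · intro a _ b _ hab
        exact σ.symm.injective hab
    rw [Fin.card_Ici, Fin.card_Ioi] at hcard
    omega
  obtain ⟨j, hj⟩ := hz
  have hp : (∏ l, mg g (σ l) l) = 0 := Finset.prod_eq_zero (Finset.mem_univ j) hj
  rw [hp, smul_zero]

lemma herm_step (hγ : IsDiscreteNorm γ) (g : GL (Fin n) K) (i : Fin n)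
    (h : PT ((i : ℕ) + 1) g) :
    ∃ k : GL (Fin n) K, IsO γ k ∧ PT (i : ℕ) (g * k) := by
  classical
  obtain ⟨j₀, hj₀i, hj₀⟩ := pivot_exists g i h
  obtain ⟨jst, hjmem, hjmax⟩ := Finset.exists_max_image (Finset.Iic i)
    (fun j => γ (mg g i j)) ⟨j₀, Finset.mem_Iic.2 hj₀i⟩
  rw [Finset.mem_Iic] at hjmem
  have hjst_ne : mg g i jst ≠ 0 := by
    intro h0
    apply hj₀
    have h1 := hjmax j₀ (Finset.mem_Iic.2 hj₀i)
    rw [h0, g0 hγ] at h1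
    exact (hγ.eq_zero_iff _).1 (le_antisymm h1 (hγ.nonneg _))
  set τ : Equiv.Perm (Fin n) := Equiv.swap jst i with hτ
  have hτi : τ i = jst := by rw [hτ, Equiv.swap_apply_right]
  have hτle : ∀ j : Fin n, j ≤ i → τ j ≤ i := by
    intro j hj
    rw [hτ]
    rcases eq_or_ne j jst with h1 | h1
    · rw [h1, Equiv.swap_apply_left]
    · rcases eq_or_ne j i with h2 | h2
      · rw [h2, Equiv.swap_apply_right]; exact hjmem
      · rw [Equiv.swap_apply_of_ne_of_ne h1 h2]; exact hj
  set T : Matrix (Fin n) (Fin n) K := Matrix.of (fun a b => if τ a = b then 1 else 0) with hT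
  have hmulT : ∀ (A : Matrix (Fin n) (Fin n) K) (l j : Fin n), (A * T) l j = A l (τ j) := by
    intro A l j
    rw [Matrix.mul_apply]
    have hττ : ∀ m : Fin n, τ (τ m) = m := fun m => Equiv.swap_apply_self jst i m
    have hkey : ∀ m : Fin n, A l m * T m j = if m = τ j then A l m else 0 := by
      intro m
      by_cases hm : m = τ j
      · subst hm
        rw [if_pos rfl, hT]
        simp only [Matrix.of_apply]
        rw [if_pos (hττ j), mul_one]
      · rw [if_neg hm, hT]
        simp only [Matrix.of_apply]
        rw [if_neg (fun he => hm (by rw [← he]; exact (hττ m).symm)), mul_zero]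
    rw [Finset.sum_congr rfl (fun m _ => hkey m), Finset.sum_ite_eq' Finset.univ (τ j) (fun m => A l m)]
    simp
  have hTT : T * T = 1 := by
    ext a b
    rw [hmulT T a b, hT]
    simp only [Matrix.of_apply]
    by_cases hab : a = b
    · simp [hab, Matrix.one_apply]
    · have : τ a ≠ τ b := fun he => hab (τ.injective he)
      simp [this, Matrix.one_apply, hab]
  set kT : GL (Fin n) K := glMk T T hTT hTT with hkT
  set M₁ : Matrix (Fin n) (Fin n) K := mg g * T with hM₁
  have hM₁e : ∀ l j, M₁ l j = mg g l (τ j) := fun l j => hmulT (mg g) l j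
  have hM₁ii : M₁ i i = mg g i jst := by rw [hM₁e, hτi]
  have hpiv : M₁ i i ≠ 0 := by rw [hM₁ii]; exact hjst_ne
  set α : Fin n → K := fun j => - (M₁ i j) / (M₁ i i) with hα
  set A : Matrix (Fin n) (Fin n) K := Matrix.of (fun a b => if a = i ∧ b < i then α b else 0) with hA
  have hAA : A * A = 0 := by
    ext a b
    rw [Matrix.mul_apply]
    apply Finset.sum_eq_zero
    intro m _
    rw [hA]
    simp only [Matrix.of_apply]
    by_cases h1 : a = i ∧ m < i
    · by_cases h2 : m = i ∧ b < i
      · exact absurd (h2.1 ▸ h1.2) (lt_irrefl i)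
      · simp [h1, h2]
    · simp [h1]
  have hEE : (1 + A) * (1 - A) = 1 := by
    rw [mul_sub, mul_one, add_mul, one_mul, hAA]
    abel
  have hEE' : (1 - A) * (1 + A) = 1 := by
    rw [sub_mul, one_mul, mul_add, mul_one, hAA]
    abel
  set kE : GL (Fin n) K := glMk (1 + A) (1 - A) hEE hEE' with hkE
  have hmulE : ∀ (B : Matrix (Fin n) (Fin n) K) (l j : Fin n),
      (B * (1 + A)) l j = B l j + (if j < i then B l i * α j else 0) := by
    intro B l j
    rw [mul_add, mul_one, Matrix.add_apply]
    congr 1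
    rw [Matrix.mul_apply]
    have : ∀ m : Fin n, B l m * A m j = if m = i then (if j < i then B l i * α j else 0) else 0 := by
      intro m
      rw [hA]
      simp only [Matrix.of_apply]
      by_cases h1 : m = i
      · by_cases h2 : j < i
        · simp [h1, h2]
        · simp [h1, h2]
      · simp [h1]
    rw [Finset.sum_congr rfl (fun m _ => this m)]
    rw [Finset.sum_ite_eq' Finset.univ i]
    simp
  -- IsO of kT
  have hIsOT : IsO γ kT := by
    have hTb : ∀ a b : Fin n, γ (T a b) ≤ 1 := by
      intro a b
      rw [hT]
      simp only [Matrix.of_apply]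
      by_cases hab : τ a = b
      · rw [if_pos hab, g1 hγ]
      · rw [if_neg hab, g0 hγ]; norm_num
    intro a b
    exact ⟨hTb a b, hTb a b⟩
  -- IsO of kE
  have hαb : ∀ j : Fin n, j < i → γ (α j) ≤ 1 := by
    intro j hj
    show γ (-M₁ i j / M₁ i i) ≤ 1
    have h1 : γ (M₁ i j) ≤ γ (M₁ i i) := by
      rw [hM₁ii, hM₁e]
      exact hjmax (τ j) (Finset.mem_Iic.2 (hτle j (le_of_lt hj)))
    have h2 : 0 < γ (M₁ i i) := gpos hγ hpiv
    rw [div_eq_mul_inv, hγ.map_mul, gneg hγ, ginv hγ hpiv]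
    rw [mul_inv_le_iff₀ h2, one_mul]
    exact h1
  have hgen : ∀ (β : Fin n → K), (∀ j : Fin n, j < i → γ (β j) ≤ 1) → ∀ a b : Fin n,
      γ ((1 + Matrix.of (fun a b : Fin n => if a = i ∧ b < i then β b else 0)) a b) ≤ 1 := by
    intro β hβ a b
    rw [Matrix.add_apply]
    simp only [Matrix.of_apply]
    by_cases h1 : a = i ∧ b < i
    · have hab : a ≠ b := by rw [h1.1]; exact fun he => absurd (he ▸ h1.2) (lt_irrefl _)
      rw [Matrix.one_apply_ne hab, if_pos h1, zero_add]
      exact hβ b h1.2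
    · rw [if_neg h1, add_zero]
      by_cases hab : a = b
      · rw [hab, Matrix.one_apply_eq, g1 hγ]
      · rw [Matrix.one_apply_ne hab, g0 hγ]; norm_num
  have hIsOE : IsO γ kE := by
    intro a b
    constructor
    · have h1 : mg kE = 1 + A := rfl
      rw [h1, hA]
      exact hgen α (fun j hj => hαb j hj) a b
    · have h1 : mg kE⁻¹ = 1 - A := rfl
      have h2 : (1 : Matrix (Fin n) (Fin n) K) - A =
          1 + Matrix.of (fun a b : Fin n => if a = i ∧ b < i then -α b else 0) := by
        rw [hA]
        ext a' b'
        simp only [Matrix.sub_apply, Matrix.add_apply, Matrix.of_apply]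
        by_cases hc : a' = i ∧ b' < i
        · rw [if_pos hc, if_pos hc]; ring
        · rw [if_neg hc, if_neg hc]; ring
      rw [h1, h2]
      refine hgen (fun j => -α j) (fun j hj => ?_) a b
      rw [gneg hγ]
      exact hαb j hj
  refine ⟨kT * kE, IsO_mul hγ hIsOT hIsOE, ?_⟩
  -- PT i (g * (kT * kE))
  have hmat : mg (g * (kT * kE)) = M₁ * (1 + A) := by
    rw [mg_mul, mg_mul, hkT, hkE, mg_glMk, mg_glMk, hM₁, Matrix.mul_assoc]
  intro l j hjl hil
  rw [hmat, hmulE]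
  rcases eq_or_lt_of_le hil with hle | hlt
  · -- l = i
    have hli : l = i := Fin.ext hle.symm
    subst hli
    rw [if_pos hjl]
    show M₁ l j + M₁ l l * (-M₁ l j / M₁ l l) = 0
    field_simp
    ring
  · -- i < l
    have hltf : i < l := Fin.lt_def.2 hlt
    have h1 : M₁ l j = 0 := by
      rw [hM₁e]
      have hτj : τ j < l := by
        rcases eq_or_ne j jst with e1 | e1
        · rw [hτ, e1, Equiv.swap_apply_left]
          exact hltf
        · rcases eq_or_ne j i with e2 | e2
          · rw [hτ, e2, Equiv.swap_apply_right]
            exact lt_of_le_of_lt hjmem hltf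
          · rw [hτ, Equiv.swap_apply_of_ne_of_ne e1 e2]
            exact hjl
      exact h l (τ j) hτj (by omega)
    have h2 : M₁ l i = 0 := by
      rw [hM₁e, hτi]
      exact h l jst (lt_of_le_of_lt hjmem hltf) (by omega)
    rw [h1, h2]
    simp

/-- full Hermite decomposition -/
lemma herm (hγ : IsDiscreteNorm γ) (g : GL (Fin n) K) :
    ∃ k : GL (Fin n) K, IsO γ k ∧ UT (mg (g * k)) := by
  have aux : ∀ d : ℕ, ∃ k : GL (Fin n) K, IsO γ k ∧ PT (n - d) (g * k) := by
    intro d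
    induction d with
    | zero =>
      refine ⟨1, IsO_one hγ, ?_⟩
      intro l j _ hl
      exact absurd (lt_of_le_of_lt hl l.isLt) (by omega)
    | succ d ih =>
      obtain ⟨k, hk, hpt⟩ := ih
      by_cases hd : d < n
      · set i : Fin n := ⟨n - (d + 1), by omega⟩ with hi
        have hpt' : PT ((i : ℕ) + 1) (g * k) := by
          have : (i : ℕ) + 1 = n - d := by simp [hi]; omega
          rwa [this]
        obtain ⟨k', hk', hpt''⟩ := herm_step hγ (g * k) i hpt'
        refine ⟨k * k', IsO_mul hγ hk hk', ?_⟩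
        have : (i : ℕ) = n - (d + 1) := rfl
        rw [← mul_assoc] at *
        rwa [this] at hpt''
      · refine ⟨k, hk, ?_⟩
        have : n - (d + 1) = n - d := by omega
        rwa [this]
  obtain ⟨k, hk, hpt⟩ := aux n
  refine ⟨k, hk, ?_⟩
  intro i j hij
  exact hpt i j hij (by omega)

variable (γ) in
/-- chosen O-part of Hermite decomposition -/
noncomputable def kk (hγ : IsDiscreteNorm γ) (g : GL (Fin n) K) : GL (Fin n) K :=
  (herm hγ g).choose

variable (γ) in
/-- chosen triangular part -/
noncomputable def bb (hγ : IsDiscreteNorm γ) (g : GL (Fin n) K) : GL (Fin n) K :=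
  g * kk γ hγ g

lemma kk_isO (hγ : IsDiscreteNorm γ) (g : GL (Fin n) K) : IsO γ (kk γ hγ g) :=
  (herm hγ g).choose_spec.1

lemma bb_UT (hγ : IsDiscreteNorm γ) (g : GL (Fin n) K) : UT (mg (bb γ hγ g)) :=
  (herm hγ g).choose_spec.2

variable (γ) in
/-- diagonal norms -/
noncomputable def dd (hγ : IsDiscreteNorm γ) (g : GL (Fin n) K) (i : Fin n) : ℝ :=
  γ (mg (bb γ hγ g) i i)

lemma dd_pos (hγ : IsDiscreteNorm γ) (g : GL (Fin n) K) (i : Fin n) : 0 < dd γ hγ g i :=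
  gpos hγ (UT_diag_ne_zero (bb_UT hγ g) i)

variable (γ) in
/-- the invariant Lipschitz map Φ -/
noncomputable def Phi (hγ : IsDiscreteNorm γ) (g : GL (Fin n) K) (i : Fin n) : ℝ :=
  Real.log (dd γ hγ g i)

/-- comparison of diagonals across a bounded multiplier: the key well-definedness lemma.
If the entries of `x⁻¹ * (φ * y)` (and its inverse) are ≤ a, where φ is unipotent
upper triangular, then the diagonals dd x, dd y agree up to factor a. -/
lemma diag_compare (hγ : IsDiscreteNorm γ) (x y φ : GL (Fin n) K)
    (hφ : UT (mg φ)) (hφd : ∀ i, mg φ i i = 1) {a : ℝ} (ha0 : 0 ≤ a)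
    (ha : ∀ i j, γ (mg (x⁻¹ * (φ * y)) i j) ≤ a ∧ γ (mg (x⁻¹ * (φ * y))⁻¹ i j) ≤ a) :
    ∀ i, dd γ hγ y i ≤ a * dd γ hγ x i ∧ dd γ hγ x i ≤ a * dd γ hγ y i := by
  intro i
  set bx := bb γ hγ x with hbx
  set by' := bb γ hγ y with hby
  set t : GL (Fin n) K := bx⁻¹ * (φ * by') with ht
  have hteq : t = (kk γ hγ x)⁻¹ * (x⁻¹ * (φ * y)) * kk γ hγ y := by
    rw [ht, hbx, hby, bb, bb]; group
  have htinv : t⁻¹ = (kk γ hγ y)⁻¹ * (x⁻¹ * (φ * y))⁻¹ * kk γ hγ x := by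
    rw [hteq]; group
  have htb : ∀ i j, γ (mg t i j) ≤ a := by
    rw [hteq]
    exact sandwich hγ (IsO_inv (kk_isO hγ x)) (kk_isO hγ y) ha0 (fun i j => (ha i j).1)
  have htb' : ∀ i j, γ (mg t⁻¹ i j) ≤ a := by
    rw [htinv]
    exact sandwich hγ (IsO_inv (kk_isO hγ y)) (kk_isO hγ x) ha0 (fun i j => (ha i j).2)
  have hbxUT : UT (mg bx) := bb_UT hγ x
  have hbyUT : UT (mg by') := bb_UT hγ y
  have htUT : UT (mg t) := by
    rw [ht, mg_mul, mg_mul]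
    exact UT_mul (UT_inv hbxUT) (UT_mul hφ hbyUT)
  have hdiag : mg t i i = (mg bx i i)⁻¹ * mg by' i i := by
    rw [ht, mg_mul, mg_mul]
    rw [diag_mul (UT_inv hbxUT) (UT_mul hφ hbyUT), diag_mul hφ hbyUT, hφd, one_mul,
      diag_inv hbxUT]
  have hγt : γ (mg t i i) = dd γ hγ y i / dd γ hγ x i := by
    rw [hdiag, hγ.map_mul, ginv hγ (UT_diag_ne_zero hbxUT i)]
    rw [dd, dd, ← hbx, ← hby]
    ring
  constructor
  · have h1 := htb i i
    rw [hγt, div_le_iff₀ (dd_pos hγ x i)] at h1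
    calc dd γ hγ y i ≤ a * dd γ hγ x i := h1
    _ = a * dd γ hγ x i := rfl
  · have h1 := htb' i i
    rw [diag_inv htUT, ginv hγ (UT_diag_ne_zero htUT i), hγt] at h1
    rw [inv_div, div_le_iff₀ (dd_pos hγ y i)] at h1
    exact h1

/-- invariance of dd under left multiplication by unipotent upper triangular matrices -/
lemma dd_shift (hγ : IsDiscreteNorm γ) (y φ : GL (Fin n) K)
    (hφ : UT (mg φ)) (hφd : ∀ i, mg φ i i = 1) :
    ∀ i, dd γ hγ (φ * y) i = dd γ hγ y i := by
  intro i
  set w : GL (Fin n) K := (bb γ hγ (φ * y))⁻¹ * (φ * bb γ hγ y) with hw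
  have hweq : w = (kk γ hγ (φ * y))⁻¹ * kk γ hγ y := by
    rw [hw, bb, bb]; group
  have hwO : IsO γ w := by
    rw [hweq]
    exact IsO_mul hγ (IsO_inv (kk_isO hγ (φ * y))) (kk_isO hγ y)
  have hbUT : UT (mg (bb γ hγ (φ * y))) := bb_UT hγ (φ * y)
  have hbyUT : UT (mg (bb γ hγ y)) := bb_UT hγ y
  have hwUT : UT (mg w) := by
    rw [hw, mg_mul, mg_mul]
    exact UT_mul (UT_inv hbUT) (UT_mul hφ hbyUT)
  have hdiag : mg w i i = (mg (bb γ hγ (φ * y)) i i)⁻¹ * mg (bb γ hγ y) i i := by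
    rw [hw, mg_mul, mg_mul]
    rw [diag_mul (UT_inv hbUT) (UT_mul hφ hbyUT), diag_mul hφ hbyUT, hφd, one_mul,
      diag_inv hbUT]
  have hγw : γ (mg w i i) = dd γ hγ y i / dd γ hγ (φ * y) i := by
    rw [hdiag, hγ.map_mul, ginv hγ (UT_diag_ne_zero hbUT i), dd, dd]
    ring
  have h1 : γ (mg w i i) ≤ 1 := (hwO i i).1
  have h2 : γ (mg w⁻¹ i i) ≤ 1 := (hwO i i).2
  rw [diag_inv hwUT, ginv hγ (UT_diag_ne_zero hwUT i), hγw] at h2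
  rw [hγw] at h1
  rw [inv_div] at h2
  have hp1 := dd_pos hγ y i
  have hp2 := dd_pos hγ (φ * y) i
  rw [div_le_one hp2] at h1
  rw [div_le_one hp1] at h2
  linarith

section main

variable (hγ : IsDiscreteNorm γ) {F : Subgroup (GL (Fin n) K)}
  (hFfin : (F : Set (GL (Fin n) K)).Finite)
  (hFU : ∀ g ∈ F, (∀ i j : Fin n, j < i → (g : Matrix (Fin n) (Fin n) K) i j = 0) ∧
      (∀ i : Fin n, (g : Matrix (Fin n) (Fin n) K) i i = 1))
  {r : ℝ} (hr : 0 < r)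

set_option linter.unusedSectionVars false

include hγ hFfin hFU hr

lemma qd_le (x y : GL (Fin n) K) (f : F) :
    quotDist (normDist γ) F x y ≤ normDist γ ((f : GL (Fin n) K) * x) y := by
  haveI : Finite F := hFfin.to_subtype
  exact ciInf_le (Set.Finite.bddBelow (Set.finite_range _)) f

lemma qd_reach {x y : GL (Fin n) K} {c : ℝ} (h : quotDist (normDist γ) F x y ≤ c) :
    ∃ f : F, normDist γ ((f : GL (Fin n) K) * x) y ≤ c := by
  haveI : Finite F := hFfin.to_subtype
  haveI : Nonempty F := ⟨⟨1, F.one_mem⟩⟩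
  obtain ⟨f₀, hf₀⟩ := Finite.exists_min (fun f : F => normDist γ ((f : GL (Fin n) K) * x) y)
  exact ⟨f₀, le_trans (le_ciInf hf₀) h⟩

/-- from a quotDist bound in either direction, extract a good multiplier -/
lemma step_extract {x y : GL (Fin n) K}
    (h : quotDist (normDist γ) F x y ≤ r ∨ quotDist (normDist γ) F y x ≤ r) :
    ∃ φ : GL (Fin n) K, φ ∈ F ∧ UT (mg φ) ∧ (∀ i, mg φ i i = 1) ∧
      (∀ i j, γ (mg (x⁻¹ * (φ * y)) i j) ≤ Real.exp r ∧
        γ (mg (x⁻¹ * (φ * y))⁻¹ i j) ≤ Real.exp r) := by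
  rcases h with h | h
  · obtain ⟨f, hf⟩ := qd_reach hγ hFfin hFU hr h
    have hfUT : UT (mg (f : GL (Fin n) K)) := (hFU f f.2).1
    have hfd : ∀ i, mg (f : GL (Fin n) K) i i = 1 := (hFU f f.2).2
    refine ⟨(f : GL (Fin n) K)⁻¹, F.inv_mem f.2, UT_inv hfUT, ?_, ?_⟩
    · intro i
      rw [diag_inv hfUT, hfd, inv_one]
    · have he : x⁻¹ * ((f : GL (Fin n) K)⁻¹ * y) = ((f : GL (Fin n) K) * x)⁻¹ * y := by group
      rw [he]
      exact nl_ge hγ hf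
  · obtain ⟨f, hf⟩ := qd_reach hγ hFfin hFU hr h
    have hfUT : UT (mg (f : GL (Fin n) K)) := (hFU f f.2).1
    have hfd : ∀ i, mg (f : GL (Fin n) K) i i = 1 := (hFU f f.2).2
    refine ⟨(f : GL (Fin n) K), f.2, hfUT, hfd, ?_⟩
    have he : x⁻¹ * ((f : GL (Fin n) K) * y) = (((f : GL (Fin n) K) * y)⁻¹ * x)⁻¹ := by group
    intro i j
    constructor
    · rw [he]
      exact (nl_ge hγ hf i j).2
    · rw [he, inv_inv]
      exact (nl_ge hγ hf i j).1


variable (γ) in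
/-- cube at multi-index m, side S (in Φ-coordinates) -/
def Vm (hγ : IsDiscreteNorm γ) (S : ℝ) (m : Fin n → ℤ) : Set (GL (Fin n) K) :=
  {x | ∀ i, Int.floor (Phi γ hγ x i / S) = m i}

variable (γ F) in
/-- one chain step within the cube -/
def Step (hγ : IsDiscreteNorm γ) (r S : ℝ) (m : Fin n → ℤ) (x y : GL (Fin n) K) : Prop :=
  x ∈ Vm γ hγ S m ∧ y ∈ Vm γ hγ S m ∧
    (quotDist (normDist γ) F x y ≤ r ∨ quotDist (normDist γ) F y x ≤ r)

omit hFfin hFU hr in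
lemma vm_ratio {S : ℝ} (hS : 0 < S) {m : Fin n → ℤ} {x y : GL (Fin n) K}
    (hx : x ∈ Vm γ hγ S m) (hy : y ∈ Vm γ hγ S m) (i : Fin n) :
    dd γ hγ y i ≤ Real.exp S * dd γ hγ x i := by
  have h1 := (Int.floor_eq_iff.1 (hx i))
  have h2 := (Int.floor_eq_iff.1 (hy i))
  have hd : Phi γ hγ y i - Phi γ hγ x i < S := by
    have a1 : (m i : ℝ) ≤ Phi γ hγ x i / S := h1.1
    have a2 : Phi γ hγ y i / S < m i + 1 := h2.2
    have hlt : Phi γ hγ y i / S - Phi γ hγ x i / S < 1 := by linarith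
    calc Phi γ hγ y i - Phi γ hγ x i = (Phi γ hγ y i / S - Phi γ hγ x i / S) * S := by
          field_simp
    _ < 1 * S := by apply mul_lt_mul_of_pos_right hlt hS
    _ = S := one_mul S
  have hyv : dd γ hγ y i = Real.exp (Phi γ hγ y i) := (Real.exp_log (dd_pos hγ y i)).symm
  have hxv : dd γ hγ x i = Real.exp (Phi γ hγ x i) := (Real.exp_log (dd_pos hγ x i)).symm
  rw [hyv, hxv, ← Real.exp_add]
  apply Real.exp_le_exp.2
  linarith

variable (γ) in
/-- relative triangular matrix -/
noncomputable def Pm (hγ : IsDiscreteNorm γ) (x u : GL (Fin n) K) : GL (Fin n) K :=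
  (bb γ hγ x)⁻¹ * bb γ hγ u

omit hFfin hFU hr in
lemma Pm_UT (x u : GL (Fin n) K) : UT (mg (Pm γ hγ x u)) := by
  rw [Pm, mg_mul]
  exact UT_mul (UT_inv (bb_UT hγ x)) (bb_UT hγ u)

omit hFfin hFU hr in
lemma Pm_diag (x w φ : GL (Fin n) K) (hφUT : UT (mg φ)) (hφd : ∀ i, mg φ i i = 1)
    (i : Fin n) :
    γ (mg (Pm γ hγ x (φ * w)) i i) = dd γ hγ w i / dd γ hγ x i := by
  rw [Pm, mg_mul, diag_mul (UT_inv (bb_UT hγ x)) (bb_UT hγ (φ * w)),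
    hγ.map_mul, diag_inv (bb_UT hγ x), ginv hγ (UT_diag_ne_zero (bb_UT hγ x) i)]
  have h1 : γ (mg (bb γ hγ (φ * w)) i i) = dd γ hγ w i := dd_shift hγ w φ hφUT hφd i
  rw [h1]
  unfold dd
  ring

/-- the key chain-invariant lemma -/
lemma chain_inv {S : ℝ} (hS : S = r + 1) (m : Fin n → ℤ) (x : GL (Fin n) K)
    (hx : x ∈ Vm γ hγ S m) :
    ∀ y, Relation.ReflTransGen (Step γ F hγ r S m) x y →
    ∃ φ : GL (Fin n) K, φ ∈ F ∧ UT (mg φ) ∧ (∀ i, mg φ i i = 1) ∧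
      (∀ i i' : Fin n,
        γ (mg (Pm γ hγ x (φ * y)) i i') ≤
          Real.exp (2*r + 2*S) ^ ((i' : ℕ) - (i : ℕ)) * γ (mg (Pm γ hγ x (φ * y)) i' i')) ∧
      (∀ i i' : Fin n,
        γ (mg (Pm γ hγ x (φ * y))⁻¹ i i') ≤
          Real.exp (2*r + 2*S) ^ ((i' : ℕ) - (i : ℕ)) * γ (mg (Pm γ hγ x (φ * y))⁻¹ i i)) := by
  set M : ℝ := Real.exp (2*r + 2*S) with hM
  have hS0 : 0 < S := by rw [hS]; linarith
  have hM1 : 1 ≤ M := Real.one_le_exp (by linarith)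
  have hM0 : 0 < M := lt_of_lt_of_le one_pos hM1
  intro y hy
  induction hy with
  | refl =>
    refine ⟨1, F.one_mem, by rw [mg_one]; exact UT_one, ?_, ?_, ?_⟩
    · intro i; rw [mg_one]; exact Matrix.one_apply_eq i
    · intro i i'
      have hP : Pm γ hγ x (1 * x) = 1 := by rw [one_mul, Pm]; group
      rw [hP, mg_one]
      rcases eq_or_ne i i' with h | h
      · subst h
        rw [Matrix.one_apply_eq]
        have : (i : ℕ) - (i : ℕ) = 0 := by omega
        rw [this, pow_zero, one_mul]
      · rw [Matrix.one_apply_ne h, g0 hγ]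
        exact mul_nonneg (pow_nonneg (Real.exp_pos _).le _) (hγ.nonneg _)
    · intro i i'
      have hP : Pm γ hγ x (1 * x) = 1 := by rw [one_mul, Pm]; group
      rw [hP, inv_one, mg_one]
      rcases eq_or_ne i i' with h | h
      · subst h
        rw [Matrix.one_apply_eq]
        have : (i : ℕ) - (i : ℕ) = 0 := by omega
        rw [this, pow_zero, one_mul]
      · rw [Matrix.one_apply_ne h, g0 hγ]
        exact mul_nonneg (pow_nonneg (Real.exp_pos _).le _) (hγ.nonneg _)
  | tail hxb hbc ih =>
    rename_i b c
    obtain ⟨φ, hφF, hφUT, hφd, iha, ihb⟩ := ih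
    obtain ⟨hbV, hcV, hqd⟩ := hbc
    obtain ⟨ψ, hψF, hψUT, hψd, hψbd⟩ := step_extract hγ hFfin hFU hr hqd
    set φ' : GL (Fin n) K := φ * ψ with hφ'
    have hφ'UT : UT (mg φ') := by rw [hφ', mg_mul]; exact UT_mul hφUT hψUT
    have hφ'd : ∀ i, mg φ' i i = 1 := by
      intro i
      rw [hφ', mg_mul, diag_mul hφUT hψUT, hφd, hψd, one_mul]
    set P : GL (Fin n) K := Pm γ hγ x (φ * b) with hP
    set P' : GL (Fin n) K := Pm γ hγ x (φ' * c) with hP'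
    set t : GL (Fin n) K := (bb γ hγ (φ * b))⁻¹ * bb γ hγ (φ' * c) with htdef
    have hP't : P' = P * t := by rw [hP', hP, htdef, Pm, Pm]; group
    have hteq : t = (kk γ hγ (φ * b))⁻¹ * (b⁻¹ * (ψ * c)) * kk γ hγ (φ' * c) := by
      rw [htdef, bb, bb, hφ']
      group
    have htinv : t⁻¹ = (kk γ hγ (φ' * c))⁻¹ * (b⁻¹ * (ψ * c))⁻¹ * kk γ hγ (φ * b) := by
      rw [hteq]; group
    have htb : ∀ i j, γ (mg t i j) ≤ Real.exp r := by
      rw [hteq]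
      exact sandwich hγ (IsO_inv (kk_isO hγ (φ * b))) (kk_isO hγ (φ' * c))
        (Real.exp_pos r).le (fun i j => (hψbd i j).1)
    have htb' : ∀ i j, γ (mg t⁻¹ i j) ≤ Real.exp r := by
      rw [htinv]
      exact sandwich hγ (IsO_inv (kk_isO hγ (φ' * c))) (kk_isO hγ (φ * b))
        (Real.exp_pos r).le (fun i j => (hψbd i j).2)
    have htUT : UT (mg t) := by
      rw [htdef, mg_mul]
      exact UT_mul (UT_inv (bb_UT hγ (φ * b))) (bb_UT hγ (φ' * c))
    have htdiag_ne : ∀ i, mg t i i ≠ 0 := UT_diag_ne_zero htUT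
    have htd_pos : ∀ i, 0 < γ (mg t i i) := fun i => gpos hγ (htdiag_ne i)
    have htd_lo : ∀ i, Real.exp (-r) ≤ γ (mg t i i) := by
      intro i
      have h1 : γ (mg t⁻¹ i i) ≤ Real.exp r := htb' i i
      rw [diag_inv htUT, ginv hγ (htdiag_ne i)] at h1
      have h2 := inv_anti₀ (inv_pos.2 (htd_pos i)) h1
      rw [inv_inv] at h2
      rw [Real.exp_neg]
      exact h2
    have hPUT : UT (mg P) := Pm_UT hγ x (φ * b)
    have hP'UT : UT (mg P') := Pm_UT hγ x (φ' * c)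
    -- diagonal bounds of P and P'
    have hPd : ∀ i, γ (mg P i i) = dd γ hγ b i / dd γ hγ x i := fun i =>
      Pm_diag hγ x b φ hφUT hφd i
    have hP'd : ∀ i, γ (mg P' i i) = dd γ hγ c i / dd γ hγ x i := fun i =>
      Pm_diag hγ x c φ' hφ'UT hφ'd i
    have hxV : x ∈ Vm γ hγ S m := hx
    have hPd_hi : ∀ i, γ (mg P i i) ≤ Real.exp S := by
      intro i
      rw [hPd i, div_le_iff₀ (dd_pos hγ x i)]
      calc dd γ hγ b i ≤ Real.exp S * dd γ hγ x i := vm_ratio hγ hS0 hxV hbV i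
      _ = Real.exp S * dd γ hγ x i := rfl
    have hPd_lo : ∀ i, Real.exp (-S) ≤ γ (mg P i i) := by
      intro i
      rw [hPd i, le_div_iff₀ (dd_pos hγ x i)]
      have h1 := vm_ratio hγ hS0 hbV hxV i
      rw [Real.exp_neg]
      calc (Real.exp S)⁻¹ * dd γ hγ x i ≤ (Real.exp S)⁻¹ * (Real.exp S * dd γ hγ b i) := by
            apply mul_le_mul_of_nonneg_left h1 (by positivity)
      _ = dd γ hγ b i := by field_simp
    have hP'd_hi : ∀ i, γ (mg P' i i) ≤ Real.exp S := by
      intro i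
      rw [hP'd i, div_le_iff₀ (dd_pos hγ x i)]
      exact vm_ratio hγ hS0 hxV hcV i
    have hP'd_lo : ∀ i, Real.exp (-S) ≤ γ (mg P' i i) := by
      intro i
      rw [hP'd i, le_div_iff₀ (dd_pos hγ x i)]
      have h1 := vm_ratio hγ hS0 hcV hxV i
      rw [Real.exp_neg]
      calc (Real.exp S)⁻¹ * dd γ hγ x i ≤ (Real.exp S)⁻¹ * (Real.exp S * dd γ hγ c i) := by
            apply mul_le_mul_of_nonneg_left h1 (by positivity)
      _ = dd γ hγ c i := by field_simp
    -- the key numeric inequality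
    have hnum : ∀ k : ℕ, 1 ≤ k → Real.exp S * Real.exp r ≤ M ^ k * (Real.exp (-S) * Real.exp (-r)) := by
      intro k hk
      have h1 : M ≤ M ^ k := le_self_pow₀ hM1 (by omega)
      have h2 : M * (Real.exp (-S) * Real.exp (-r)) = Real.exp S * Real.exp r := by
        rw [hM, ← Real.exp_add, ← Real.exp_add, ← Real.exp_add]
        congr 1
        ring
      calc Real.exp S * Real.exp r = M * (Real.exp (-S) * Real.exp (-r)) := h2.symm
      _ ≤ M ^ k * (Real.exp (-S) * Real.exp (-r)) := by
          apply mul_le_mul_of_nonneg_right h1 (by positivity)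
    refine ⟨φ', mul_mem hφF hψF, hφ'UT, hφ'd, ?_, ?_⟩
    · -- forward bound
      intro i i'
      have hdiagP' : γ (mg P' i' i') = γ (mg P i' i') * γ (mg t i' i') := by
        rw [hP't, mg_mul, diag_mul hPUT htUT, hγ.map_mul]
      have hrhs_pos : 0 < γ (mg P' i' i') := gpos hγ (UT_diag_ne_zero hP'UT i')
      rcases lt_or_ge (i' : ℕ) (i : ℕ) with hlt | hle
      · have : mg P' i i' = 0 := hP'UT i i' (Fin.lt_def.2 hlt)
        rw [this, g0 hγ]
        positivity
      · have hm : mg P' i i' = ∑ l, mg P i l * mg t l i' := by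
          rw [hP't, mg_mul, Matrix.mul_apply]
        rw [hm]
        apply gsum hγ _ _ (by positivity)
        intro l _
        rw [hγ.map_mul]
        rcases lt_or_ge (l : ℕ) (i : ℕ) with hl1 | hl1
        · rw [hPUT i l (Fin.lt_def.2 hl1), g0 hγ, zero_mul]
          positivity
        · rcases lt_or_ge (i' : ℕ) (l : ℕ) with hl2 | hl2
          · rw [htUT l i' (Fin.lt_def.2 hl2), g0 hγ, mul_zero]
            positivity
          · rcases eq_or_lt_of_le hl2 with he | hlt2
            · -- l = i'
              have : l = i' := Fin.ext he
              subst this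
              rw [hdiagP']
              have h1 := iha i l
              calc γ (mg P i l) * γ (mg t l l)
                  ≤ (M ^ ((l:ℕ) - (i:ℕ)) * γ (mg P l l)) * γ (mg t l l) := by
                    apply mul_le_mul_of_nonneg_right h1 (hγ.nonneg _)
              _ = M ^ ((l:ℕ) - (i:ℕ)) * (γ (mg P l l) * γ (mg t l l)) := by ring
            · -- l < i'
              have h1 : γ (mg P i l) ≤ M ^ ((l:ℕ) - (i:ℕ)) * Real.exp S := by
                calc γ (mg P i l) ≤ M ^ ((l:ℕ) - (i:ℕ)) * γ (mg P l l) := iha i l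
                _ ≤ M ^ ((l:ℕ) - (i:ℕ)) * Real.exp S := by
                    apply mul_le_mul_of_nonneg_left (hPd_hi l) (by positivity)
              have h2 : γ (mg t l i') ≤ Real.exp r := htb l i'
              have h3 : Real.exp (-S) * Real.exp (-r) ≤ γ (mg P i' i') * γ (mg t i' i') := by
                apply mul_le_mul (hPd_lo i') (htd_lo i') (Real.exp_pos _).le (hγ.nonneg _)
              have h4 := hnum ((i':ℕ) - (l:ℕ)) (by omega)
              have hsplit : M ^ ((i':ℕ) - (i:ℕ)) = M ^ ((l:ℕ) - (i:ℕ)) * M ^ ((i':ℕ) - (l:ℕ)) := by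
                rw [← pow_add]
                congr 1
                omega
              rw [hdiagP', hsplit]
              calc γ (mg P i l) * γ (mg t l i')
                  ≤ (M ^ ((l:ℕ) - (i:ℕ)) * Real.exp S) * Real.exp r := by
                    apply mul_le_mul h1 h2 (hγ.nonneg _) (by positivity)
              _ = M ^ ((l:ℕ) - (i:ℕ)) * (Real.exp S * Real.exp r) := by ring
              _ ≤ M ^ ((l:ℕ) - (i:ℕ)) * (M ^ ((i':ℕ) - (l:ℕ)) * (Real.exp (-S) * Real.exp (-r))) := by
                    apply mul_le_mul_of_nonneg_left h4 (by positivity)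
              _ = (M ^ ((l:ℕ) - (i:ℕ)) * M ^ ((i':ℕ) - (l:ℕ))) * (Real.exp (-S) * Real.exp (-r)) := by ring
              _ ≤ (M ^ ((l:ℕ) - (i:ℕ)) * M ^ ((i':ℕ) - (l:ℕ))) * (γ (mg P i' i') * γ (mg t i' i')) := by
                    apply mul_le_mul_of_nonneg_left h3 (by positivity)
              _ = M ^ ((l:ℕ) - (i:ℕ)) * M ^ ((i':ℕ) - (l:ℕ)) * (γ (mg P i' i') * γ (mg t i' i')) := rfl
    · -- inverse bound
      intro i i'
      have hP'inv : P'⁻¹ = t⁻¹ * P⁻¹ := by rw [hP't]; group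
      have hPinvUT : UT (mg P⁻¹) := UT_inv hPUT
      have htinvUT : UT (mg t⁻¹) := UT_inv htUT
      have hP'invUT : UT (mg P'⁻¹) := UT_inv hP'UT
      have hdiagP'inv : γ (mg P'⁻¹ i i) = γ (mg t⁻¹ i i) * γ (mg P⁻¹ i i) := by
        rw [hP'inv, mg_mul, diag_mul htinvUT hPinvUT, hγ.map_mul]
      have hPinv_d_hi : ∀ j, γ (mg P⁻¹ j j) ≤ Real.exp S := by
        intro j
        rw [diag_inv hPUT, ginv hγ (UT_diag_ne_zero hPUT j)]
        have h1 := inv_anti₀ (Real.exp_pos (-S)) (hPd_lo j)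
        rw [Real.exp_neg, inv_inv] at h1
        exact h1
      have hPinv_d_lo : Real.exp (-S) ≤ γ (mg P⁻¹ i i) := by
        rw [diag_inv hPUT, ginv hγ (UT_diag_ne_zero hPUT i), Real.exp_neg]
        exact inv_anti₀ (gpos hγ (UT_diag_ne_zero hPUT i)) (hPd_hi i)
      have htinv_d_lo : Real.exp (-r) ≤ γ (mg t⁻¹ i i) := by
        rw [diag_inv htUT, ginv hγ (htdiag_ne i), Real.exp_neg]
        exact inv_anti₀ (htd_pos i) (htb i i)
      rcases lt_or_ge (i' : ℕ) (i : ℕ) with hlt | hle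
      · have : mg P'⁻¹ i i' = 0 := hP'invUT i i' (Fin.lt_def.2 hlt)
        rw [this, g0 hγ]
        have := gpos hγ (UT_diag_ne_zero hP'invUT i)
        positivity
      · have hm : mg P'⁻¹ i i' = ∑ l, mg t⁻¹ i l * mg P⁻¹ l i' := by
          rw [hP'inv, mg_mul, Matrix.mul_apply]
        rw [hm]
        have hrhs_pos : 0 < γ (mg P'⁻¹ i i) := gpos hγ (UT_diag_ne_zero hP'invUT i)
        apply gsum hγ _ _ (by positivity)
        intro l _
        rw [hγ.map_mul]
        rcases lt_or_ge (l : ℕ) (i : ℕ) with hl1 | hl1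
        · rw [htinvUT i l (Fin.lt_def.2 hl1), g0 hγ, zero_mul]
          positivity
        · rcases lt_or_ge (i' : ℕ) (l : ℕ) with hl2 | hl2
          · rw [hPinvUT l i' (Fin.lt_def.2 hl2), g0 hγ, mul_zero]
            positivity
          · rcases eq_or_lt_of_le hl1 with he | hlt1
            · -- l = i
              have : l = i := Fin.ext he.symm
              subst this
              rw [hdiagP'inv]
              have h1 := ihb l i'
              calc γ (mg t⁻¹ l l) * γ (mg P⁻¹ l i')
                  ≤ γ (mg t⁻¹ l l) * (M ^ ((i':ℕ) - (l:ℕ)) * γ (mg P⁻¹ l l)) := by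
                    apply mul_le_mul_of_nonneg_left h1 (hγ.nonneg _)
              _ = M ^ ((i':ℕ) - (l:ℕ)) * (γ (mg t⁻¹ l l) * γ (mg P⁻¹ l l)) := by ring
            · -- i < l
              have h1 : γ (mg P⁻¹ l i') ≤ M ^ ((i':ℕ) - (l:ℕ)) * Real.exp S := by
                calc γ (mg P⁻¹ l i') ≤ M ^ ((i':ℕ) - (l:ℕ)) * γ (mg P⁻¹ l l) := ihb l i'
                _ ≤ M ^ ((i':ℕ) - (l:ℕ)) * Real.exp S := by
                    apply mul_le_mul_of_nonneg_left (hPinv_d_hi l) (by positivity)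
              have h2 : γ (mg t⁻¹ i l) ≤ Real.exp r := htb' i l
              have h3 : Real.exp (-r) * Real.exp (-S) ≤ γ (mg t⁻¹ i i) * γ (mg P⁻¹ i i) := by
                apply mul_le_mul htinv_d_lo hPinv_d_lo (Real.exp_pos _).le (hγ.nonneg _)
              have h4 := hnum ((l:ℕ) - (i:ℕ)) (by omega)
              have hsplit : M ^ ((i':ℕ) - (i:ℕ)) = M ^ ((l:ℕ) - (i:ℕ)) * M ^ ((i':ℕ) - (l:ℕ)) := by
                rw [← pow_add]
                congr 1
                omega
              rw [hdiagP'inv, hsplit]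
              calc γ (mg t⁻¹ i l) * γ (mg P⁻¹ l i')
                  ≤ Real.exp r * (M ^ ((i':ℕ) - (l:ℕ)) * Real.exp S) := by
                    apply mul_le_mul h2 h1 (hγ.nonneg _) (Real.exp_pos _).le
              _ = M ^ ((i':ℕ) - (l:ℕ)) * (Real.exp S * Real.exp r) := by ring
              _ ≤ M ^ ((i':ℕ) - (l:ℕ)) * (M ^ ((l:ℕ) - (i:ℕ)) * (Real.exp (-S) * Real.exp (-r))) := by
                    apply mul_le_mul_of_nonneg_left h4 (by positivity)
              _ = (M ^ ((l:ℕ) - (i:ℕ)) * M ^ ((i':ℕ) - (l:ℕ))) * (Real.exp (-r) * Real.exp (-S)) := by ring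
              _ ≤ (M ^ ((l:ℕ) - (i:ℕ)) * M ^ ((i':ℕ) - (l:ℕ))) * (γ (mg t⁻¹ i i) * γ (mg P⁻¹ i i)) := by
                    apply mul_le_mul_of_nonneg_left h3 (by positivity)
              _ = M ^ ((l:ℕ) - (i:ℕ)) * M ^ ((i':ℕ) - (l:ℕ)) * (γ (mg t⁻¹ i i) * γ (mg P⁻¹ i i)) := rfl


lemma phi_close {x y : GL (Fin n) K} (h : quotDist (normDist γ) F x y ≤ r) :
    ∀ i, |Phi γ hγ y i - Phi γ hγ x i| ≤ r := by
  obtain ⟨f, hf⟩ := qd_reach hγ hFfin hFU hr h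
  have hfUT : UT (mg (f : GL (Fin n) K)) := (hFU f f.2).1
  have hfd : ∀ i, mg (f : GL (Fin n) K) i i = 1 := (hFU f f.2).2
  have hent : ∀ i j, γ (mg (((f : GL (Fin n) K) * x)⁻¹ * (1 * y)) i j) ≤ Real.exp r ∧
      γ (mg (((f : GL (Fin n) K) * x)⁻¹ * (1 * y))⁻¹ i j) ≤ Real.exp r := by
    have heq : ((f : GL (Fin n) K) * x)⁻¹ * (1 * y) = ((f : GL (Fin n) K) * x)⁻¹ * y := by
      group
    rw [heq]
    exact nl_ge hγ hf
  have hcmp := diag_compare hγ ((f : GL (Fin n) K) * x) y 1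
    (by rw [mg_one]; exact UT_one) (fun i => by rw [mg_one]; exact Matrix.one_apply_eq i)
    (Real.exp_pos r).le hent
  intro i
  have h1 := (hcmp i).1
  have h2 := (hcmp i).2
  rw [dd_shift hγ x (f : GL (Fin n) K) hfUT hfd i] at h1 h2
  have hp1 := dd_pos hγ x i
  have hp2 := dd_pos hγ y i
  have la : Real.log (dd γ hγ y i) ≤ r + Real.log (dd γ hγ x i) := by
    calc Real.log (dd γ hγ y i) ≤ Real.log (Real.exp r * dd γ hγ x i) :=
      Real.log_le_log (by positivity) h1
    _ = r + Real.log (dd γ hγ x i) := by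
      rw [Real.log_mul (Real.exp_ne_zero r) (ne_of_gt hp1), Real.log_exp]
  have lb : Real.log (dd γ hγ x i) ≤ r + Real.log (dd γ hγ y i) := by
    calc Real.log (dd γ hγ x i) ≤ Real.log (Real.exp r * dd γ hγ y i) :=
      Real.log_le_log (by positivity) h2
    _ = r + Real.log (dd γ hγ y i) := by
      rw [Real.log_mul (Real.exp_ne_zero r) (ne_of_gt hp2), Real.log_exp]
  rw [Phi, Phi]
  rw [abs_le]
  constructor <;> linarith

omit hFfin hFU hr in
lemma step_symm {S : ℝ} {m : Fin n → ℤ} {x y : GL (Fin n) K}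
    (h : Step γ F hγ r S m x y) : Step γ F hγ r S m y x :=
  ⟨h.2.1, h.1, h.2.2.symm⟩

omit hFfin hFU hr in
lemma rtg_symm {S : ℝ} {m : Fin n → ℤ} {x y : GL (Fin n) K}
    (h : Relation.ReflTransGen (Step γ F hγ r S m) x y) :
    Relation.ReflTransGen (Step γ F hγ r S m) y x := by
  induction h with
  | refl => exact Relation.ReflTransGen.refl
  | tail hxb hbc ih => exact Relation.ReflTransGen.head (step_symm hγ hbc) ih

omit hFfin hFU hr in
lemma vm_rtg {S : ℝ} {m : Fin n → ℤ} {x y : GL (Fin n) K}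
    (h : Relation.ReflTransGen (Step γ F hγ r S m) x y) (hx : x ∈ Vm γ hγ S m) :
    y ∈ Vm γ hγ S m := by
  induction h with
  | refl => exact hx
  | tail _ hbc _ => exact hbc.2.1

/-- chain components within a cube have diameter at most B -/
lemma comp_bound {S : ℝ} (hS : S = r + 1) (m : Fin n → ℤ) (x : GL (Fin n) K)
    (hx : x ∈ Vm γ hγ S m) (y : GL (Fin n) K)
    (hy : Relation.ReflTransGen (Step γ F hγ r S m) x y) :
    quotDist (normDist γ) F x y ≤ (n : ℝ) * (2*r + 2*S) + S := by
  set M : ℝ := Real.exp (2*r + 2*S) with hM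
  set B : ℝ := (n : ℝ) * (2*r + 2*S) + S with hB
  have hS0 : 0 < S := by rw [hS]; linarith
  have hM1 : 1 ≤ M := Real.one_le_exp (by linarith)
  have hB0 : 0 ≤ B := by
    rw [hB]
    have : (0:ℝ) ≤ (n : ℝ) := Nat.cast_nonneg n
    nlinarith
  have hMS : M ^ n * Real.exp S = Real.exp B := by
    rw [hM, ← Real.exp_nat_mul, ← Real.exp_add, hB]
  have hyV : y ∈ Vm γ hγ S m := vm_rtg hγ hy hx
  obtain ⟨φ, hφF, hφUT, hφd, ha, hb⟩ := chain_inv hγ hFfin hFU hr hS m x hx y hy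
  set Q : GL (Fin n) K := Pm γ hγ x (φ * y) with hQ
  have hQUT : UT (mg Q) := Pm_UT hγ x (φ * y)
  have hQd_hi : ∀ i, γ (mg Q i i) ≤ Real.exp S := by
    intro i
    rw [hQ, Pm_diag hγ x y φ hφUT hφd i, div_le_iff₀ (dd_pos hγ x i)]
    exact vm_ratio hγ hS0 hx hyV i
  have hQinvd_hi : ∀ i, γ (mg Q⁻¹ i i) ≤ Real.exp S := by
    intro i
    rw [diag_inv hQUT, ginv hγ (UT_diag_ne_zero hQUT i), hQ,
      Pm_diag hγ x y φ hφUT hφd i, inv_div, div_le_iff₀ (dd_pos hγ y i)]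
    exact vm_ratio hγ hS0 hyV hx i
  have hpow : ∀ i i' : Fin n, M ^ ((i' : ℕ) - (i : ℕ)) ≤ M ^ n := by
    intro i i'
    exact pow_le_pow_right₀ hM1 (by omega)
  have hQb : ∀ i j, γ (mg Q i j) ≤ Real.exp B := by
    intro i j
    rcases lt_or_ge (j : ℕ) (i : ℕ) with hlt | hle
    · rw [hQUT i j (Fin.lt_def.2 hlt), g0 hγ]
      positivity
    · calc γ (mg Q i j) ≤ M ^ ((j : ℕ) - (i : ℕ)) * γ (mg Q j j) := ha i j
      _ ≤ M ^ n * Real.exp S := by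
          apply mul_le_mul (hpow i j) (hQd_hi j) (hγ.nonneg _) (by positivity)
      _ = Real.exp B := hMS
  have hQinvb : ∀ i j, γ (mg Q⁻¹ i j) ≤ Real.exp B := by
    intro i j
    rcases lt_or_ge (j : ℕ) (i : ℕ) with hlt | hle
    · rw [UT_inv hQUT i j (Fin.lt_def.2 hlt), g0 hγ]
      positivity
    · calc γ (mg Q⁻¹ i j) ≤ M ^ ((j : ℕ) - (i : ℕ)) * γ (mg Q⁻¹ i i) := hb i j
      _ ≤ M ^ n * Real.exp S := by
          apply mul_le_mul (hpow i j) (hQinvd_hi i) (hγ.nonneg _) (by positivity)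
      _ = Real.exp B := hMS
  -- now bound the norm length
  have heq : (φ⁻¹ * x)⁻¹ * y = kk γ hγ x * Q * (kk γ hγ (φ * y))⁻¹ := by
    rw [hQ, Pm, bb, bb]
    group
  have hnl : normLength γ ((φ⁻¹ * x)⁻¹ * y) ≤ B := by
    apply nl_le hγ hB0
    intro i j
    constructor
    · rw [heq]
      exact sandwich hγ (kk_isO hγ x) (IsO_inv (kk_isO hγ (φ * y)))
        (Real.exp_pos B).le hQb i j
    · have heq2 : ((φ⁻¹ * x)⁻¹ * y)⁻¹ = kk γ hγ (φ * y) * Q⁻¹ * (kk γ hγ x)⁻¹ := by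
        rw [heq]
        group
      rw [heq2]
      exact sandwich hγ (kk_isO hγ (φ * y)) (IsO_inv (kk_isO hγ x))
        (Real.exp_pos B).le hQinvb i j
  have hqle := qd_le hγ hFfin hFU hr x y ⟨φ⁻¹, F.inv_mem hφF⟩
  calc quotDist (normDist γ) F x y ≤ normDist γ (φ⁻¹ * x) y := hqle
  _ = normLength γ ((φ⁻¹ * x)⁻¹ * y) := rfl
  _ ≤ B := hnl

end main
end AsdimAux

open AsdimAux in
/-- Let `K` be a field of positive characteristic and `γ` a discrete norm
on `K`. Let `U ≤ GL_n(K)` be the group of unipotent upper triangular matrices. The family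
`{F\GL_n(K)}_F`, where `F` ranges over all finite subgroups of `U`, has finite asymptotic
dimension uniformly with respect to the pseudometric associated to `γ`. -/
theorem unipotent_finite_subgroup_quotients_uniformFinAsdim
    {K : Type} [Field K] (p : ℕ) (hp : p ≠ 0) [CharP K p]
    (n : ℕ) (γ : K → ℝ) (hγ : IsDiscreteNorm γ) :
    UniformFinAsdim
      (fun _ : {F : Subgroup (GL (Fin n) K) // (F : Set (GL (Fin n) K)).Finite ∧
          ∀ g ∈ F, (∀ i j : Fin n, j < i → (g : Matrix (Fin n) (Fin n) K) i j = 0) ∧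
            (∀ i : Fin n, (g : Matrix (Fin n) (Fin n) K) i i = 1)} => GL (Fin n) K)
      (fun F => quotDist (normDist γ) F.1) := by
  classical
  refine ⟨2 ^ n - 1, ?_⟩
  intro r hr
  set S : ℝ := r + 1 with hSdef
  have hS0 : 0 < S := by rw [hSdef]; linarith
  refine ⟨(n : ℝ) * (2*r + 2*S) + S, ?_⟩
  rintro ⟨F, hFfin, hFU⟩
  have hcard : Fintype.card (Fin n → Bool) = 2 ^ n - 1 + 1 := by
    have h1 : Fintype.card (Fin n → Bool) = 2 ^ n := by
      rw [Fintype.card_fun]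
      simp
    have h2 : 1 ≤ 2 ^ n := Nat.one_le_two_pow
    omega
  set enc : (Fin n → Bool) → Fin (2 ^ n - 1 + 1) :=
    fun c => Fin.cast hcard ((Fintype.equivFin (Fin n → Bool)) c) with henc
  have henc_inj : Function.Injective enc := by
    intro a b h
    apply (Fintype.equivFin (Fin n → Bool)).injective
    exact Fin.cast_injective hcard h
  set par : (Fin n → ℤ) → (Fin n → Bool) := fun m i => decide (m i % 2 = 0) with hpar
  refine ⟨fun k => {A | ∃ m : Fin n → ℤ, enc (par m) = k ∧ ∃ x₀, x₀ ∈ Vm γ hγ S m ∧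
      A = {y | Relation.ReflTransGen (Step γ F hγ r S m) x₀ y}}, ?_, ?_, ?_⟩
  · -- covering
    intro x
    refine ⟨enc (par (fun i => ⌊Phi γ hγ x i / S⌋)),
      {y | Relation.ReflTransGen (Step γ F hγ r S (fun i => ⌊Phi γ hγ x i / S⌋)) x y},
      ⟨(fun i => ⌊Phi γ hγ x i / S⌋), rfl, x, fun i => rfl, rfl⟩,
      Relation.ReflTransGen.refl⟩
  · -- r-disjointness
    rintro k U ⟨m, hkm, x₀, hx₀, rfl⟩ V ⟨m', hkm', x₀', hx₀', rfl⟩ hUV x hxU y hyV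
    by_contra hcon
    push_neg at hcon
    have hxVm : x ∈ Vm γ hγ S m := vm_rtg hγ hxU hx₀
    have hyVm' : y ∈ Vm γ hγ S m' := vm_rtg hγ hyV hx₀'
    rcases eq_or_ne m m' with hmm | hmm
    · subst hmm
      apply hUV
      have hstep : Step γ F hγ r S m x y := ⟨hxVm, hyVm', Or.inl hcon⟩
      have h1 : Relation.ReflTransGen (Step γ F hγ r S m) x₀ x₀' :=
        (hxU.trans (Relation.ReflTransGen.single hstep)).trans (rtg_symm hγ hyV)
      ext z
      constructor
      · intro hz
        exact (rtg_symm hγ h1).trans hz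
      · intro hz
        exact h1.trans hz
    · exfalso
      obtain ⟨i, hi⟩ : ∃ i, m i ≠ m' i := by
        by_contra hc
        push_neg at hc
        exact hmm (funext hc)
      have hpareq : par m = par m' := henc_inj (hkm.trans hkm'.symm)
      have hpari := congrFun hpareq i
      have hmod : m i % 2 = 0 ↔ m' i % 2 = 0 := by
        simpa [hpar, decide_eq_decide] using hpari
      have hgap : m i + 2 ≤ m' i ∨ m' i + 2 ≤ m i := by omega
      have hclose := phi_close hγ hFfin hFU hr hcon i
      have hfx := Int.floor_eq_iff.1 (hxVm i)
      have hfy := Int.floor_eq_iff.1 (hyVm' i)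
      have habs1 := le_abs_self (Phi γ hγ y i - Phi γ hγ x i)
      have habs2 := neg_abs_le (Phi γ hγ y i - Phi γ hγ x i)
      rcases hgap with hg | hg
      · have b1 : (m i : ℝ) + 2 ≤ (m' i : ℝ) := by exact_mod_cast hg
        have b2 : (m' i : ℝ) ≤ Phi γ hγ y i / S := hfy.1
        have b3 : Phi γ hγ x i / S < m i + 1 := hfx.2
        have hdiv : 1 < (Phi γ hγ y i - Phi γ hγ x i) / S := by
          rw [sub_div]
          linarith
        have hgt : S < Phi γ hγ y i - Phi γ hγ x i := (one_lt_div hS0).1 hdiv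
        rw [hSdef] at hgt
        linarith
      · have b1 : (m' i : ℝ) + 2 ≤ (m i : ℝ) := by exact_mod_cast hg
        have b2 : (m i : ℝ) ≤ Phi γ hγ x i / S := hfx.1
        have b3 : Phi γ hγ y i / S < m' i + 1 := hfy.2
        have hdiv : 1 < (Phi γ hγ x i - Phi γ hγ y i) / S := by
          rw [sub_div]
          linarith
        have hgt : S < Phi γ hγ x i - Phi γ hγ y i := (one_lt_div hS0).1 hdiv
        rw [hSdef] at hgt
        linarith
  · -- diameter bound
    rintro k U ⟨m, hkm, x₀, hx₀, rfl⟩ x hxU y hyU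
    have hrtg : Relation.ReflTransGen (Step γ F hγ r S m) x y :=
      (rtg_symm hγ hxU).trans hyU
    have hxVm : x ∈ Vm γ hγ S m := vm_rtg hγ hxU hx₀
    exact comp_bound hγ hFfin hFU hr hSdef m x hxVm y hrtg
end

section
/- Let G be a group with a proper left-invariant metric such that the metric family {H\G}_{H∈Fin} of quotients of G by all its finite subgroups has finite decomposition complexity. Then the equivariant metric family {(G,H)}_{H∈Fin}, where each finite subgroup H acts on G by left multiplication, has equivariant finite decomposition complexity. -/
open Matrix

/-- A metric family: a family of (pseudo)metric spaces. -/
structure MetricFamily : Type 1 where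
  idx : Type
  spc : idx → Type
  dist : ∀ i, spc i → spc i → ℝ

/-- Given for each member `spc i` of a family a collection `𝒰 i` of subsets (pieces),
the family of all these pieces with their induced metrics. -/
def MetricFamily.ofPieces (F : MetricFamily) (𝒰 : ∀ i, Set (Set (F.spc i))) :
    MetricFamily where
  idx := Σ i, ↥(𝒰 i)
  spc := fun q => ↥(q.2.1)
  dist := fun q x y => F.dist q.1 x.1 y.1

/-- A metric family is bounded if its members have uniformly bounded diameter. -/
def MetricFamily.Bounded (F : MetricFamily) : Prop :=
  ∃ B : ℝ, ∀ i x y, F.dist i x y ≤ B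

/-- A collection of subsets is `r`-disjoint if distinct members are at distance `> r`. -/
def RDisjointCollection {X : Type} (d : X → X → ℝ) (r : ℝ) (𝒰 : Set (Set X)) : Prop :=
  ∀ U ∈ 𝒰, ∀ V ∈ 𝒰, U ≠ V → ∀ x ∈ U, ∀ y ∈ V, r < d x y

/-- A metric family decomposes over a class `D` of metric families if for every `r > 0`
each member splits as a union `U ∪ V`, each of `U`, `V` being an `r`-disjoint union of
pieces, such that the two resulting families of pieces lie in `D`. -/
def MetricFamily.DecomposesOver (F : MetricFamily) (D : MetricFamily → Prop) : Prop :=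
  ∀ r : ℝ, 0 < r → ∃ 𝒰 𝒱 : ∀ i, Set (Set (F.spc i)),
    (∀ i (x : F.spc i), (∃ S ∈ 𝒰 i, x ∈ S) ∨ (∃ S ∈ 𝒱 i, x ∈ S)) ∧
    (∀ i, RDisjointCollection (F.dist i) r (𝒰 i)) ∧
    (∀ i, RDisjointCollection (F.dist i) r (𝒱 i)) ∧
    D (F.ofPieces 𝒰) ∧ D (F.ofPieces 𝒱)

/-- The hierarchy `𝔇_γ`: `𝔇_0` = bounded families, `𝔇_{γ+1}` = families decomposing over
`𝔇_γ`, and unions at limit ordinals. -/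
noncomputable def FDCClass (γ : Ordinal.{0}) : MetricFamily → Prop :=
  Ordinal.limitRecOn γ MetricFamily.Bounded
    (fun _ D F => F.DecomposesOver D)
    (fun o _ D F => ∃ β, ∃ h : β < o, D β h F)

/-- A metric family has finite decomposition complexity if it lies in `𝔇_γ` for some
ordinal `γ`. -/
def HasFDC (F : MetricFamily) : Prop := ∃ γ : Ordinal.{0}, FDCClass γ F

/-- The metric family `{F\G}_{F ∈ Fin}` of quotients of `G` by all its finite subgroups,
each quotient realized as `G` with the quotient pseudometric. -/
noncomputable def quotFamily (G : Type) [Group G] (d : G → G → ℝ) : MetricFamily where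
  idx := {F : Subgroup G // (F : Set G).Finite}
  spc := fun _ => G
  dist := fun F x y => quotDist d F.1 x y

open scoped ENNReal

/-- An equivariant metric family: a family of (extended-real-valued) metric spaces
`spc i` together with a group `grp i` acting on `spc i`. -/
structure EquivMetricFamily : Type 1 where
  idx : Type
  grp : idx → Type
  spc : idx → Type
  dist : ∀ i, spc i → spc i → ℝ≥0∞
  act : ∀ i, grp i → spc i → spc i

open Classical in
/-- Given for each member a collection of pieces, the equivariant family whose members are
the disjoint unions of the pieces (points in different pieces at distance `∞`), with the
induced action (when the collections of pieces are invariant under the actions). -/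
noncomputable def EquivMetricFamily.subFam (F : EquivMetricFamily)
    (𝒰 : ∀ i, Set (Set (F.spc i))) : EquivMetricFamily where
  idx := F.idx
  grp := F.grp
  spc := fun i => {x : F.spc i // ∃ S ∈ 𝒰 i, x ∈ S}
  dist := fun i x y => if ∃ S ∈ 𝒰 i, x.1 ∈ S ∧ y.1 ∈ S then F.dist i x.1 y.1 else ⊤
  act := fun i g x =>
    if h : ∃ S ∈ 𝒰 i, F.act i g x.1 ∈ S then ⟨F.act i g x.1, h⟩ else x

/-- An equivariant metric family is semi-bounded if there is `R` such that all distances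
are `< R` or `= ∞`. -/
def EquivMetricFamily.SemiBounded (F : EquivMetricFamily) : Prop :=
  ∃ R : ℝ≥0∞, R ≠ ⊤ ∧ ∀ i x y, F.dist i x y < R ∨ F.dist i x y = ⊤

/-- Equivariant decomposition over a class `D` of equivariant metric families: for every
`r > 0` each member splits into two invariant subspaces, each an `r`-disjoint union of
pieces permuted by the group action, with the resulting two equivariant families
(of disjoint unions of the pieces) in `D`. -/
def EquivMetricFamily.DecomposesOver (F : EquivMetricFamily)
    (D : EquivMetricFamily → Prop) : Prop :=
  ∀ r : ℝ≥0∞, 0 < r → r ≠ ⊤ → ∃ 𝒰 𝒱 : ∀ i, Set (Set (F.spc i)),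
    (∀ i (x : F.spc i), (∃ S ∈ 𝒰 i, x ∈ S) ∨ (∃ S ∈ 𝒱 i, x ∈ S)) ∧
    (∀ i (g : F.grp i), ∀ S ∈ 𝒰 i, F.act i g '' S ∈ 𝒰 i) ∧
    (∀ i (g : F.grp i), ∀ S ∈ 𝒱 i, F.act i g '' S ∈ 𝒱 i) ∧
    (∀ i, ∀ S ∈ 𝒰 i, ∀ T ∈ 𝒰 i, S ≠ T → ∀ x ∈ S, ∀ y ∈ T, r < F.dist i x y) ∧
    (∀ i, ∀ S ∈ 𝒱 i, ∀ T ∈ 𝒱 i, S ≠ T → ∀ x ∈ S, ∀ y ∈ T, r < F.dist i x y) ∧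
    D (F.subFam 𝒰) ∧ D (F.subFam 𝒱)

/-- The equivariant hierarchy `e𝔇_γ`: `e𝔇_0` = semi-bounded equivariant families,
`e𝔇_{γ+1}` = equivariant families decomposing over `e𝔇_γ`, unions at limits. -/
noncomputable def EquivFDCClass (γ : Ordinal.{0}) : EquivMetricFamily → Prop :=
  Ordinal.limitRecOn γ EquivMetricFamily.SemiBounded
    (fun _ D F => F.DecomposesOver D)
    (fun o _ D F => ∃ β, ∃ h : β < o, D β h F)

/-- An equivariant metric family has equivariant finite decomposition complexity if it
lies in `e𝔇_γ` for some ordinal `γ`. -/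
def HasEquivFDC (F : EquivMetricFamily) : Prop := ∃ γ : Ordinal.{0}, EquivFDCClass γ F

namespace EqFDCAux

open Classical

/-! ### Unfolding lemmas for the transfinite hierarchies -/

lemma FDCClass_zero (F : MetricFamily) : FDCClass 0 F ↔ F.Bounded := by
  unfold FDCClass
  rw [Ordinal.limitRecOn_zero]

lemma FDCClass_succ (γ : Ordinal) (F : MetricFamily) :
    FDCClass (Order.succ γ) F ↔ F.DecomposesOver (FDCClass γ) := by
  unfold FDCClass
  rw [Ordinal.limitRecOn_succ]

lemma FDCClass_limit {γ : Ordinal} (h : Order.IsSuccLimit γ) (F : MetricFamily) :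
    FDCClass γ F ↔ ∃ β, β < γ ∧ FDCClass β F := by
  unfold FDCClass
  rw [Ordinal.limitRecOn_limit _ _ _ _ h]
  exact ⟨fun ⟨β, hβ, hh⟩ => ⟨β, hβ, hh⟩, fun ⟨β, hβ, hh⟩ => ⟨β, hβ, hh⟩⟩

lemma EquivFDCClass_zero (F : EquivMetricFamily) : EquivFDCClass 0 F ↔ F.SemiBounded := by
  unfold EquivFDCClass
  rw [Ordinal.limitRecOn_zero]

lemma EquivFDCClass_succ (γ : Ordinal) (F : EquivMetricFamily) :
    EquivFDCClass (Order.succ γ) F ↔ F.DecomposesOver (EquivFDCClass γ) := by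
  unfold EquivFDCClass
  rw [Ordinal.limitRecOn_succ]

lemma EquivFDCClass_limit {γ : Ordinal} (h : Order.IsSuccLimit γ) (F : EquivMetricFamily) :
    EquivFDCClass γ F ↔ ∃ β, β < γ ∧ EquivFDCClass β F := by
  unfold EquivFDCClass
  rw [Ordinal.limitRecOn_limit _ _ _ _ h]
  exact ⟨fun ⟨β, hβ, hh⟩ => ⟨β, hβ, hh⟩, fun ⟨β, hβ, hh⟩ => ⟨β, hβ, hh⟩⟩

/-! ### Pullback stability of (non-equivariant) FDC -/

lemma fdc_pullback : ∀ γ : Ordinal, ∀ (F₁ F₂ : MetricFamily) (φ : F₂.idx → F₁.idx)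
    (ψ : ∀ i, F₂.spc i → F₁.spc (φ i)),
    (∀ i x y, F₁.dist (φ i) (ψ i x) (ψ i y) = F₂.dist i x y) →
    FDCClass γ F₁ → FDCClass γ F₂ := by
  intro γ
  induction γ using Ordinal.limitRecOn with
  | zero =>
    intro F₁ F₂ φ ψ hd h
    rw [FDCClass_zero] at h ⊢
    obtain ⟨B, hB⟩ := h
    exact ⟨B, fun i x y => (hd i x y) ▸ hB (φ i) (ψ i x) (ψ i y)⟩
  | add_one β IH =>
    rw [Ordinal.add_one_eq_succ]
    intro F₁ F₂ φ ψ hd h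
    rw [FDCClass_succ] at h ⊢
    intro r hr
    obtain ⟨𝒰₁, 𝒱₁, hcov, hU, hV, hCU, hCV⟩ := h r hr
    refine ⟨fun i => {P | ∃ U ∈ 𝒰₁ (φ i), P = ψ i ⁻¹' U},
            fun i => {P | ∃ U ∈ 𝒱₁ (φ i), P = ψ i ⁻¹' U}, ?_, ?_, ?_, ?_, ?_⟩
    · intro i x
      rcases hcov (φ i) (ψ i x) with ⟨U, hUm, hxm⟩ | ⟨U, hUm, hxm⟩
      · exact Or.inl ⟨ψ i ⁻¹' U, ⟨U, hUm, rfl⟩, hxm⟩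
      · exact Or.inr ⟨ψ i ⁻¹' U, ⟨U, hUm, rfl⟩, hxm⟩
    · rintro i P ⟨U, hUm, rfl⟩ P' ⟨U', hUm', rfl⟩ hne x hx y hy
      have hUne : U ≠ U' := by rintro rfl; exact hne rfl
      rw [← hd i x y]
      exact hU (φ i) U hUm U' hUm' hUne _ hx _ hy
    · rintro i P ⟨U, hUm, rfl⟩ P' ⟨U', hUm', rfl⟩ hne x hx y hy
      have hUne : U ≠ U' := by rintro rfl; exact hne rfl
      rw [← hd i x y]
      exact hV (φ i) U hUm U' hUm' hUne _ hx _ hy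
    · exact IH (F₁.ofPieces 𝒰₁) _
        (fun q => ⟨φ q.1, q.2.2.choose, q.2.2.choose_spec.1⟩)
        (fun q p => ⟨ψ q.1 p.1, by show ψ q.1 p.1 ∈ q.2.2.choose; rw [← Set.mem_preimage, ← q.2.2.choose_spec.2]; exact p.2⟩)
        (fun q p p' => hd q.1 p.1 p'.1) hCU
    · exact IH (F₁.ofPieces 𝒱₁) _
        (fun q => ⟨φ q.1, q.2.2.choose, q.2.2.choose_spec.1⟩)
        (fun q p => ⟨ψ q.1 p.1, by show ψ q.1 p.1 ∈ q.2.2.choose; rw [← Set.mem_preimage, ← q.2.2.choose_spec.2]; exact p.2⟩)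
        (fun q p p' => hd q.1 p.1 p'.1) hCV
  | limit o ho IH =>
    intro F₁ F₂ φ ψ hd h
    rw [FDCClass_limit ho] at h ⊢
    obtain ⟨β, hβ, hh⟩ := h
    exact ⟨β, hβ, IH β hβ F₁ F₂ φ ψ hd hh⟩

end EqFDCAux
namespace EqFDCAux

open scoped Classical

/-! ### Basic lemmas about `subFam` -/

lemma subFam_dist (E : EquivMetricFamily) (𝒰 : ∀ i, Set (Set (E.spc i))) (i : E.idx)
    (x y : (E.subFam 𝒰).spc i) :
    (E.subFam 𝒰).dist i x y
      = if ∃ S ∈ 𝒰 i, x.1 ∈ S ∧ y.1 ∈ S then E.dist i x.1 y.1 else ⊤ := by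
  simp only [EquivMetricFamily.subFam]

lemma subFam_act_pos (E : EquivMetricFamily) (𝒰 : ∀ i, Set (Set (E.spc i))) (i : E.idx)
    (g : E.grp i) (x : (E.subFam 𝒰).spc i) (h : ∃ S ∈ 𝒰 i, E.act i g x.1 ∈ S) :
    ((E.subFam 𝒰).act i g x).1 = E.act i g x.1 := by
  simp only [EquivMetricFamily.subFam]
  exact congrArg Subtype.val (dif_pos h)

lemma subFam_act_neg (E : EquivMetricFamily) (𝒰 : ∀ i, Set (Set (E.spc i))) (i : E.idx)
    (g : E.grp i) (x : (E.subFam 𝒰).spc i) (h : ¬ ∃ S ∈ 𝒰 i, E.act i g x.1 ∈ S) :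
    (E.subFam 𝒰).act i g x = x := by
  simp only [EquivMetricFamily.subFam]
  exact dif_neg h

/-! ### Pullback/isomorphism stability of equivariant FDC -/

lemma equiv_transfer : ∀ γ : Ordinal, ∀ (I : Type) (Gr : I → Type) (X₁ X₂ : I → Type)
    (d₁ : ∀ i, X₁ i → X₁ i → ENNReal) (d₂ : ∀ i, X₂ i → X₂ i → ENNReal)
    (a₁ : ∀ i, Gr i → X₁ i → X₁ i) (a₂ : ∀ i, Gr i → X₂ i → X₂ i)
    (ψ : ∀ i, X₂ i ≃ X₁ i),
    (∀ i x y, d₁ i (ψ i x) (ψ i y) = d₂ i x y) →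
    (∀ i g x, ψ i (a₂ i g x) = a₁ i g (ψ i x)) →
    EquivFDCClass γ ⟨I, Gr, X₁, d₁, a₁⟩ → EquivFDCClass γ ⟨I, Gr, X₂, d₂, a₂⟩ := by
  intro γ
  induction γ using Ordinal.limitRecOn with
  | zero =>
    intro I Gr X₁ X₂ d₁ d₂ a₁ a₂ ψ hd ha h
    rw [EquivFDCClass_zero] at h ⊢
    obtain ⟨R, hRt, hR⟩ := h
    refine ⟨R, hRt, fun i x y => ?_⟩
    have h3 : d₁ i (ψ i x) (ψ i y) < R ∨ d₁ i (ψ i x) (ψ i y) = ⊤ := hR i (ψ i x) (ψ i y)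
    rw [hd i x y] at h3
    exact h3
  | add_one β IH =>
    rw [Ordinal.add_one_eq_succ]
    intro I Gr X₁ X₂ d₁ d₂ a₁ a₂ ψ hd ha h
    rw [EquivFDCClass_succ] at h ⊢
    intro r hr hrT
    obtain ⟨𝒰₁, 𝒱₁, hcov, hinvU, hinvV, hU, hV, hCU, hCV⟩ := h r hr hrT
    have key : ∀ (𝒲 : ∀ i, Set (Set (X₁ i))),
        EquivFDCClass β (EquivMetricFamily.subFam ⟨I, Gr, X₁, d₁, a₁⟩ 𝒲) →
        EquivFDCClass β (EquivMetricFamily.subFam ⟨I, Gr, X₂, d₂, a₂⟩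
          (fun i => {P | ∃ U ∈ 𝒲 i, P = ψ i ⁻¹' U})) := by
      intro 𝒲 hcls
      have hiff : ∀ i (x : X₂ i),
          (∃ P ∈ {P | ∃ U ∈ 𝒲 i, P = ψ i ⁻¹' U}, x ∈ P) ↔ (∃ U ∈ 𝒲 i, ψ i x ∈ U) := by
        intro i x
        constructor
        · rintro ⟨P, ⟨U, hUm, rfl⟩, hm⟩
          exact ⟨U, hUm, hm⟩
        · rintro ⟨U, hUm, hm⟩
          exact ⟨ψ i ⁻¹' U, ⟨U, hUm, rfl⟩, hm⟩
      have hiff2 : ∀ i (x y : X₂ i),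
          (∃ P ∈ {P | ∃ U ∈ 𝒲 i, P = ψ i ⁻¹' U}, x ∈ P ∧ y ∈ P)
            ↔ (∃ U ∈ 𝒲 i, ψ i x ∈ U ∧ ψ i y ∈ U) := by
        intro i x y
        constructor
        · rintro ⟨P, ⟨U, hUm, rfl⟩, hm, hm'⟩
          exact ⟨U, hUm, hm, hm'⟩
        · rintro ⟨U, hUm, hm, hm'⟩
          exact ⟨ψ i ⁻¹' U, ⟨U, hUm, rfl⟩, hm, hm'⟩
      refine IH I Gr _ _ _ _ _ _
        (fun i => ⟨fun x => ⟨ψ i x.1, (hiff i x.1).mp x.2⟩,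
                   fun z => ⟨(ψ i).symm z.1, ?minv⟩, ?lift, ?rift⟩) ?hd ?ha hcls
      case minv =>
        refine (hiff i _).mpr ?_
        obtain ⟨U, hUm, hm⟩ := z.2
        exact ⟨U, hUm, by simpa using hm⟩
      case lift => intro x; apply Subtype.ext; simp
      case rift => intro z; apply Subtype.ext; simp
      case hd =>
        intro i x y
        show (if ∃ S ∈ 𝒲 i, ψ i x.1 ∈ S ∧ ψ i y.1 ∈ S
                then d₁ i (ψ i x.1) (ψ i y.1) else ⊤)
          = (if ∃ S ∈ {P | ∃ U ∈ 𝒲 i, P = ψ i ⁻¹' U}, x.1 ∈ S ∧ y.1 ∈ S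
                then d₂ i x.1 y.1 else ⊤)
        by_cases hc : ∃ U ∈ 𝒲 i, ψ i x.1 ∈ U ∧ ψ i y.1 ∈ U
        · rw [if_pos hc, if_pos ((hiff2 i x.1 y.1).mpr hc)]
          exact hd i x.1 y.1
        · rw [if_neg hc, if_neg (fun hcon => hc ((hiff2 i x.1 y.1).mp hcon))]
      case ha =>
        intro i g x
        apply Subtype.ext
        show (ψ i) ((if h : ∃ S ∈ {P | ∃ U ∈ 𝒲 i, P = ψ i ⁻¹' U}, a₂ i g x.1 ∈ S
              then (⟨a₂ i g x.1, h⟩ : {z : X₂ i // ∃ S ∈ {P | ∃ U ∈ 𝒲 i, P = ψ i ⁻¹' U}, z ∈ S})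
              else x).1)
          = ((if h : ∃ S ∈ 𝒲 i, a₁ i g (ψ i x.1) ∈ S
              then (⟨a₁ i g (ψ i x.1), h⟩ : {z : X₁ i // ∃ S ∈ 𝒲 i, z ∈ S})
              else ⟨ψ i x.1, (hiff i x.1).mp x.2⟩).1)
        by_cases hc : ∃ U ∈ 𝒲 i, a₁ i g (ψ i x.1) ∈ U
        · have hc2 : ∃ P ∈ {P | ∃ U ∈ 𝒲 i, P = ψ i ⁻¹' U}, a₂ i g x.1 ∈ P := by
            obtain ⟨U, hUm, hm⟩ := hc
            exact ⟨ψ i ⁻¹' U, ⟨U, hUm, rfl⟩, by rw [Set.mem_preimage, ha]; exact hm⟩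
          rw [dif_pos hc, dif_pos hc2]
          exact ha i g x.1
        · have hc2 : ¬ ∃ P ∈ {P | ∃ U ∈ 𝒲 i, P = ψ i ⁻¹' U}, a₂ i g x.1 ∈ P := by
            rintro ⟨P, ⟨U, hUm, rfl⟩, hm⟩
            exact hc ⟨U, hUm, by rw [← ha]; exact hm⟩
          rw [dif_neg hc, dif_neg hc2]
    have inv2 : ∀ (𝒲 : ∀ i, Set (Set (X₁ i))),
        (∀ i (g : Gr i), ∀ S ∈ 𝒲 i, a₁ i g '' S ∈ 𝒲 i) →
        ∀ i (g : Gr i), ∀ P ∈ {P | ∃ U ∈ 𝒲 i, P = ψ i ⁻¹' U},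
          a₂ i g '' P ∈ {P | ∃ U ∈ 𝒲 i, P = ψ i ⁻¹' U} := by
      intro 𝒲 hinv i g P hP
      obtain ⟨U, hUm, rfl⟩ := hP
      refine ⟨a₁ i g '' U, hinv i g U hUm, ?_⟩
      ext z
      constructor
      · rintro ⟨x, hx, rfl⟩
        exact Set.mem_preimage.mpr ⟨ψ i x, hx, (ha i g x).symm⟩
      · intro hz
        obtain ⟨w, hw, hwz⟩ := Set.mem_preimage.mp hz
        refine ⟨(ψ i).symm w, by simpa using hw, ?_⟩
        apply (ψ i).injective
        rw [ha i g _, Equiv.apply_symm_apply]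
        exact hwz
    refine ⟨fun i => {P | ∃ U ∈ 𝒰₁ i, P = ψ i ⁻¹' U},
            fun i => {P | ∃ U ∈ 𝒱₁ i, P = ψ i ⁻¹' U}, ?_, inv2 𝒰₁ hinvU, inv2 𝒱₁ hinvV,
            ?_, ?_, key 𝒰₁ hCU, key 𝒱₁ hCV⟩
    · intro i x
      rcases hcov i (ψ i x) with ⟨U, hUm, hxm⟩ | ⟨U, hUm, hxm⟩
      · exact Or.inl ⟨ψ i ⁻¹' U, ⟨U, hUm, rfl⟩, hxm⟩
      · exact Or.inr ⟨ψ i ⁻¹' U, ⟨U, hUm, rfl⟩, hxm⟩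
    · rintro i P ⟨U, hUm, rfl⟩ P' ⟨U', hUm', rfl⟩ hne x hx y hy
      have hUne : U ≠ U' := by rintro rfl; exact hne rfl
      have h2 : r < d₁ i (ψ i x) (ψ i y) := hU i U hUm U' hUm' hUne _ hx _ hy
      rw [hd i x y] at h2
      exact h2
    · rintro i P ⟨U, hUm, rfl⟩ P' ⟨U', hUm', rfl⟩ hne x hx y hy
      have hUne : U ≠ U' := by rintro rfl; exact hne rfl
      have h2 : r < d₁ i (ψ i x) (ψ i y) := hV i U hUm U' hUm' hUne _ hx _ hy
      rw [hd i x y] at h2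
      exact h2
  | limit o ho IH =>
    intro I Gr X₁ X₂ d₁ d₂ a₁ a₂ ψ hd ha h
    rw [EquivFDCClass_limit ho] at h ⊢
    obtain ⟨β, hβ, hh⟩ := h
    exact ⟨β, hβ, IH β hβ I Gr X₁ X₂ d₁ d₂ a₁ a₂ ψ hd ha hh⟩

end EqFDCAux
namespace EqFDCAux

open scoped Classical

/-! ### Monotonicity of the equivariant hierarchy (for families with bijective actions) -/

lemma equiv_mono : ∀ δ' δ : Ordinal, δ ≤ δ' → ∀ E : EquivMetricFamily,
    (∀ i (g : E.grp i), Function.Surjective (E.act i g)) →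
    EquivFDCClass δ E → EquivFDCClass δ' E := by
  intro δ'
  induction δ' using Ordinal.limitRecOn with
  | zero =>
    intro δ hδ E _ h
    rwa [nonpos_iff_eq_zero.mp hδ] at h
  | add_one β IH =>
    rw [Ordinal.add_one_eq_succ]
    intro δ hδ E hsurj h
    rcases eq_or_lt_of_le hδ with rfl | hlt
    · exact h
    · have hβ : δ ≤ β := Order.lt_succ_iff.mp hlt
      have hEβ : EquivFDCClass β E := IH δ hβ E hsurj h
      rw [EquivFDCClass_succ]
      intro r hr hrT
      refine ⟨fun i => {Set.univ}, fun i => (∅ : Set (Set (E.spc i))), ?_, ?_, ?_, ?_, ?_, ?_, ?_⟩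
      · intro i x
        exact Or.inl ⟨Set.univ, rfl, trivial⟩
      · intro i g S hS
        rw [Set.mem_singleton_iff] at hS
        subst hS
        rw [Set.image_univ, Set.mem_singleton_iff]
        exact Set.range_eq_univ.mpr (hsurj i g)
      · intro i g S hS
        exact absurd hS (Set.notMem_empty S)
      · intro i S hS T hT hne
        rw [Set.mem_singleton_iff] at hS hT
        exact absurd (hS.trans hT.symm) hne
      · intro i S hS
        exact absurd hS (Set.notMem_empty S)
      · -- the univ subfamily is isomorphic to E itself
        refine equiv_transfer β E.idx E.grp E.spc _ E.dist _ E.act _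
          (fun i => ⟨fun x => x.1, fun x => ⟨x, Set.univ, rfl, trivial⟩,
            fun x => Subtype.ext rfl, fun x => rfl⟩) ?_ ?_ hEβ
        · intro i x y
          show E.dist i x.1 y.1
            = if ∃ S ∈ ({Set.univ} : Set (Set (E.spc i))), x.1 ∈ S ∧ y.1 ∈ S
              then E.dist i x.1 y.1 else ⊤
          rw [if_pos ⟨Set.univ, rfl, trivial, trivial⟩]
        · intro i g x
          show ((if h : ∃ S ∈ ({Set.univ} : Set (Set (E.spc i))), E.act i g x.1 ∈ S
              then (⟨E.act i g x.1, h⟩ : {z : E.spc i // ∃ S ∈ ({Set.univ} : Set (Set (E.spc i))), z ∈ S})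
              else x) : {z : E.spc i // ∃ S ∈ ({Set.univ} : Set (Set (E.spc i))), z ∈ S}).1
            = E.act i g x.1
          rw [dif_pos ⟨Set.univ, rfl, trivial⟩]
      · -- the empty subfamily is semibounded, hence in every class
        refine IH 0 zero_le _ ?_ ?_
        · rintro i g ⟨x, S, hS, _⟩
          exact absurd hS (Set.notMem_empty S)
        · rw [EquivFDCClass_zero]
          refine ⟨1, ENNReal.one_ne_top, ?_⟩
          rintro i ⟨x, S, hS, _⟩
          exact absurd hS (Set.notMem_empty S)
  | limit o ho IH =>
    intro δ hδ E hsurj h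
    rcases eq_or_lt_of_le hδ with rfl | hlt
    · exact h
    · rw [EquivFDCClass_limit ho]
      exact ⟨δ, hlt, h⟩

end EqFDCAux
namespace EqFDCAux

open scoped Classical

section Group

variable {G : Type} [Group G] (d : G → G → ℝ)

/-! ### Lemmas about the quotient pseudometric -/

lemma quotDist_nonneg (hm : IsPseudoMetric d) (F : Subgroup G) (x y : G) :
    0 ≤ quotDist d F x y :=
  le_ciInf fun f => hm.nonneg _ _

lemma quotDist_bddBelow (hm : IsPseudoMetric d) (F : Subgroup G) (x y : G) :
    BddBelow (Set.range fun f : F => d ((f : G) * x) y) :=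
  ⟨0, by rintro s ⟨f, rfl⟩; exact hm.nonneg _ _⟩

lemma quotDist_le (hm : IsPseudoMetric d) (F : Subgroup G) (x y : G) :
    quotDist d F x y ≤ d x y := by
  have := ciInf_le (quotDist_bddBelow d hm F x y) (⟨1, F.one_mem⟩ : F)
  simp at this
  exact this

lemma quotDist_self (hm : IsPseudoMetric d) (F : Subgroup G) (x : G) :
    quotDist d F x x = 0 :=
  le_antisymm (by simpa [hm.refl] using quotDist_le d hm F x x) (quotDist_nonneg d hm F x x)

lemma quotDist_mul_left (F : Subgroup G) (h : G) (hh : h ∈ F) (x y : G) :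
    quotDist d F (h * x) y = quotDist d F x y := by
  unfold quotDist
  rw [iInf, iInf]
  congr 1
  ext s
  constructor
  · rintro ⟨f, rfl⟩
    exact ⟨⟨(f : G) * h, F.mul_mem f.2 hh⟩, by simp [mul_assoc]⟩
  · rintro ⟨f, rfl⟩
    exact ⟨⟨(f : G) * h⁻¹, F.mul_mem f.2 (F.inv_mem hh)⟩, by simp [mul_assoc]⟩

lemma quotDist_mul_right (hli : IsLeftInvariant d) (F : Subgroup G) (h : G) (hh : h ∈ F)
    (x y : G) : quotDist d F x (h * y) = quotDist d F x y := by
  unfold quotDist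
  rw [iInf, iInf]
  congr 1
  ext s
  constructor
  · rintro ⟨f, rfl⟩
    refine ⟨⟨h⁻¹ * (f : G), F.mul_mem (F.inv_mem hh) f.2⟩, ?_⟩
    show d (h⁻¹ * (f : G) * x) y = d ((f : G) * x) (h * y)
    have := hli h (h⁻¹ * (f : G) * x) y
    rw [← this]
    congr 1
    group
  · rintro ⟨f, rfl⟩
    refine ⟨⟨h * (f : G), F.mul_mem hh f.2⟩, ?_⟩
    show d (h * (f : G) * x) (h * y) = d ((f : G) * x) y
    have := hli h ((f : G) * x) y
    rw [← this]
    congr 1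
    group

lemma quotDist_exists_lt (F : Subgroup G) (x y : G) {B : ℝ}
    (h : quotDist d F x y < B) : ∃ f ∈ F, d (f * x) y < B := by
  haveI : Nonempty F := ⟨⟨1, F.one_mem⟩⟩
  obtain ⟨f, hf⟩ := exists_lt_of_ciInf_lt h
  exact ⟨(f : G), f.2, hf⟩

/-! ### Configurations: invariant collections of pieces -/

/-- The index type: finite subgroups of `G`. -/
abbrev Idx (G : Type) [Group G] : Type := {H : Subgroup G // (H : Set G).Finite}

/-- A configuration: for each finite subgroup, a collection of subsets of `G`. -/
abbrev Conf (G : Type) [Group G] : Type := Idx G → Set (Set G)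

/-- Each piece is invariant under the corresponding subgroup. -/
def ConfInv (C : Conf G) : Prop :=
  ∀ i : Idx G, ∀ S ∈ C i, ∀ h ∈ i.1, ∀ g ∈ S, h * g ∈ S

/-- The pieces of each collection are pairwise disjoint. -/
def ConfDisj (C : Conf G) : Prop :=
  ∀ i : Idx G, ∀ S ∈ C i, ∀ T ∈ C i, ∀ g : G, g ∈ S → g ∈ T → S = T

/-- The metric family of all pieces of a configuration, with quotient pseudometrics. -/
noncomputable def QF (C : Conf G) : MetricFamily where
  idx := Σ i : Idx G, ↥(C i)
  spc := fun q => ↥(q.2.1 : Set G)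
  dist := fun q x y => quotDist d q.1.1 x.1 y.1

/-- The equivariant metric family of disjoint unions of the pieces of a configuration. -/
noncomputable def EFam (C : Conf G) : EquivMetricFamily where
  idx := Idx G
  grp := fun i => ↥i.1
  spc := fun i => {x : G // ∃ S ∈ C i, x ∈ S}
  dist := fun i x y =>
    if ∃ S ∈ C i, x.1 ∈ S ∧ y.1 ∈ S then ENNReal.ofReal (d x.1 y.1) else ⊤
  act := fun i h x =>
    if hx : ∃ S ∈ C i, (h : G) * x.1 ∈ S then ⟨(h : G) * x.1, hx⟩ else x

variable {d} {C : Conf G}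

lemma EFam_act_eq (hinv : ConfInv C) (i : Idx G) (h : ↥i.1) (x : (EFam d C).spc i) :
    (EFam d C).act i h x
      = ⟨(h : G) * x.1, by
          obtain ⟨S, hS, hxS⟩ := x.2
          exact ⟨S, hS, hinv i S hS _ h.2 _ hxS⟩⟩ := by
  show dite _ _ _ = _
  exact dif_pos _

lemma EFam_act_act_inv (hinv : ConfInv C) (i : Idx G) (h : ↥i.1) (x : (EFam d C).spc i) :
    (EFam d C).act i h ((EFam d C).act i (h⁻¹ : ↥i.1) x) = x := by
  rw [EFam_act_eq hinv, EFam_act_eq hinv]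
  apply Subtype.ext
  show (h : G) * (((h⁻¹ : ↥i.1) : G) * x.1) = x.1
  rw [← mul_assoc]
  simp

lemma EFam_act_surj (hinv : ConfInv C) (i : Idx G) (h : ↥i.1) :
    Function.Surjective ((EFam d C).act i h) :=
  fun x => ⟨(EFam d C).act i (h⁻¹ : ↥i.1) x, EFam_act_act_inv hinv i h x⟩

lemma EFam_dist_act (hm : IsPseudoMetric d) (hli : IsLeftInvariant d) (hinv : ConfInv C)
    (i : Idx G) (h : ↥i.1) (x y : (EFam d C).spc i) :
    (EFam d C).dist i ((EFam d C).act i h x) ((EFam d C).act i h y)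
      = (EFam d C).dist i x y := by
  rw [EFam_act_eq hinv, EFam_act_eq hinv]
  show (if ∃ S ∈ C i, (h : G) * x.1 ∈ S ∧ (h : G) * y.1 ∈ S
          then ENNReal.ofReal (d ((h : G) * x.1) ((h : G) * y.1)) else ⊤)
    = (if ∃ S ∈ C i, x.1 ∈ S ∧ y.1 ∈ S then ENNReal.ofReal (d x.1 y.1) else ⊤)
  rw [hli (h : G) x.1 y.1]
  congr 1
  apply propext
  constructor
  · rintro ⟨S, hS, h1, h2⟩
    refine ⟨S, hS, ?_, ?_⟩
    · have := hinv i S hS _ (i.1.inv_mem h.2) _ h1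
      simpa using this
    · have := hinv i S hS _ (i.1.inv_mem h.2) _ h2
      simpa using this
  · rintro ⟨S, hS, h1, h2⟩
    exact ⟨S, hS, hinv i S hS _ h.2 _ h1, hinv i S hS _ h.2 _ h2⟩

end Group

end EqFDCAux
namespace EqFDCAux

open scoped Classical

section Base

variable {G : Type} [Group G] {d : G → G → ℝ} {C : Conf G}

lemma base (hm : IsPseudoMetric d) (hli : IsLeftInvariant d) (hp : IsProper d)
    (hinv : ConfInv C) (hdisj : ConfDisj C) (B : ℝ)
    (hB : ∀ (q : (QF d C).idx) (x y : (QF d C).spc q), (QF d C).dist q x y ≤ B) :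
    EquivFDCClass 1 (EFam d C) := by
  set Bm := max B 0 with hBm
  have hBm0 : 0 ≤ Bm := le_max_right _ _
  have hB' : ∀ (i : Idx G) (S : Set G), S ∈ C i → ∀ x y : G, x ∈ S → y ∈ S →
      quotDist d i.1 x y ≤ Bm := by
    intro i S hS x y hx hy
    exact le_trans (hB ⟨i, ⟨S, hS⟩⟩ ⟨x, hx⟩ ⟨y, hy⟩) (le_max_left _ _)
  rw [show (1 : Ordinal) = Order.succ 0 from Ordinal.succ_zero.symm, EquivFDCClass_succ]
  intro r hr hrT
  set r' := r.toReal with hr'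
  have hr'0 : 0 ≤ r' := ENNReal.toReal_nonneg
  set ρ := 2 * (Bm + 1) + r' with hρ
  -- the uniform bound D₀ on finite subgroups generated by elements of norm ≤ ρ
  have Kfin : {y : G | d 1 y ≤ ρ}.Finite := hp 1 ρ
  set 𝒮 : Set (Set G) :=
    {A : Set G | A ⊆ {y : G | d 1 y ≤ ρ} ∧ ((Subgroup.closure A : Subgroup G) : Set G).Finite}
    with h𝒮
  have h𝒮fin : 𝒮.Finite := (Set.Finite.finite_subsets Kfin).subset (fun A hA => hA.1)
  set U : Set G := ⋃ A ∈ 𝒮, ((Subgroup.closure A : Subgroup G) : Set G) with hUdef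
  have hUfin : U.Finite := Set.Finite.biUnion h𝒮fin (fun A hA => hA.2)
  set N : Set ℝ := insert 0 ((fun h => d 1 h) '' U) with hNdef
  have hNfin : N.Finite := (hUfin.image _).insert 0
  set D₀ := sSup N with hD₀def
  have hD₀bound : ∀ A : Set G, A ⊆ {y : G | d 1 y ≤ ρ} →
      ((Subgroup.closure A : Subgroup G) : Set G).Finite →
      ∀ h ∈ Subgroup.closure A, d 1 h ≤ D₀ := by
    intro A h1 h2 h hh
    refine le_csSup hNfin.bddAbove (Set.mem_insert_iff.mpr (Or.inr ?_))
    exact ⟨h, Set.mem_biUnion (Set.mem_setOf_eq ▸ ⟨h1, h2⟩) hh, rfl⟩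
  set Dc := Bm + 1 + D₀ with hDc
  -- the chaining relation at scale r and its components
  set R : ∀ i : Idx G, (EFam d C).spc i → (EFam d C).spc i → Prop :=
    fun i x y => (EFam d C).dist i x y ≤ r with hR
  have Rsymm : ∀ i, Symmetric (R i) := by
    intro i x y hxy
    show (EFam d C).dist i y x ≤ r
    have : (EFam d C).dist i y x = (EFam d C).dist i x y := by
      show (if ∃ S ∈ C i, y.1 ∈ S ∧ x.1 ∈ S then ENNReal.ofReal (d y.1 x.1) else ⊤)
        = (if ∃ S ∈ C i, x.1 ∈ S ∧ y.1 ∈ S then ENNReal.ofReal (d x.1 y.1) else ⊤)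
      rw [hm.symm y.1 x.1]
      congr 1
      apply propext
      constructor
      · rintro ⟨S, hS, h1, h2⟩; exact ⟨S, hS, h2, h1⟩
      · rintro ⟨S, hS, h1, h2⟩; exact ⟨S, hS, h2, h1⟩
    rw [this]
    exact hxy
  set comp : ∀ i : Idx G, (EFam d C).spc i → Set ((EFam d C).spc i) :=
    fun i x => {y | Relation.ReflTransGen (R i) x y} with hcomp
  -- the key chain estimate
  have chainQ : ∀ (i : Idx G) (x y : (EFam d C).spc i), Relation.ReflTransGen (R i) x y →
      ∃ S ∈ C i, x.1 ∈ S ∧ y.1 ∈ S ∧ ∃ f ∈ i.1,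
        x.1⁻¹ * f * x.1 ∈ Subgroup.closure
          ((fun b => x.1⁻¹ * b * x.1) '' (i.1 : Set G) ∩ {z : G | d 1 z ≤ ρ}) ∧
        d (f * x.1) y.1 ≤ Bm + 1 := by
    intro i x y hpath
    induction hpath with
    | refl =>
      obtain ⟨S, hS, hxS⟩ := x.2
      refine ⟨S, hS, hxS, hxS, 1, i.1.one_mem, ?_, ?_⟩
      · have : x.1⁻¹ * 1 * x.1 = 1 := by group
        rw [this]
        exact Subgroup.one_mem _
      · have : (1 : G) * x.1 = x.1 := one_mul _
        rw [this, hm.refl]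
        linarith
    | @tail b c h1 h2 IH =>
      obtain ⟨S, hS, hxS, hbS, f, hf, hfcl, hfd⟩ := IH
      -- from R b c extract a shared piece and a real distance bound
      have h2' : (if ∃ S ∈ C i, b.1 ∈ S ∧ c.1 ∈ S then ENNReal.ofReal (d b.1 c.1) else ⊤) ≤ r :=
        h2
      by_cases hc : ∃ S ∈ C i, b.1 ∈ S ∧ c.1 ∈ S
      · rw [if_pos hc] at h2'
        have hdbc : d b.1 c.1 ≤ r' := (ENNReal.ofReal_le_iff_le_toReal hrT).mp h2'
        obtain ⟨S', hS', hbS', hcS'⟩ := hc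
        have hSS : S = S' := hdisj i S hS S' hS' b.1 hbS hbS'
        subst hSS
        have hq : quotDist d i.1 x.1 c.1 ≤ Bm := hB' i S hS x.1 c.1 hxS hcS'
        obtain ⟨g, hg, hgd⟩ := quotDist_exists_lt d i.1 x.1 c.1
          (lt_of_le_of_lt hq (by linarith : Bm < Bm + 1))
        refine ⟨S, hS, hxS, hcS', g, hg, ?_, le_of_lt hgd⟩
        -- the step element
        set w := x.1⁻¹ * (f⁻¹ * g) * x.1 with hw
        have hwmem : w ∈ (fun b => x.1⁻¹ * b * x.1) '' (i.1 : Set G) :=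
          ⟨f⁻¹ * g, i.1.mul_mem (i.1.inv_mem hf) hg, rfl⟩
        have hwK : d 1 w ≤ ρ := by
          have e1 : d (f * x.1) (g * x.1) = d 1 w := by
            have := hli (f * x.1) 1 w
            rw [← this]
            congr 1
            · exact (mul_one _).symm
            · rw [hw]; group
          have t1 : d (f * x.1) (g * x.1) ≤ d (f * x.1) c.1 + d c.1 (g * x.1) :=
            hm.triangle _ _ _
          have t2 : d (f * x.1) c.1 ≤ d (f * x.1) b.1 + d b.1 c.1 := hm.triangle _ _ _
          have t3 : d c.1 (g * x.1) = d (g * x.1) c.1 := hm.symm _ _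
          rw [← e1]
          have := hfd
          linarith [hgd]
        have hdecomp : x.1⁻¹ * g * x.1 = (x.1⁻¹ * f * x.1) * w := by
          rw [hw]; group
        rw [hdecomp]
        exact Subgroup.mul_mem _ hfcl (Subgroup.subset_closure ⟨hwmem, hwK⟩)
      · rw [if_neg hc] at h2'
        exact absurd (top_le_iff.mp h2') hrT
  -- the diameter bound for chained points
  have bndQ : ∀ (i : Idx G) (x y : (EFam d C).spc i), Relation.ReflTransGen (R i) x y →
      (∃ S ∈ C i, x.1 ∈ S ∧ y.1 ∈ S) ∧ d x.1 y.1 ≤ Dc := by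
    intro i x y hpath
    obtain ⟨S, hS, hxS, hyS, f, hf, hfcl, hfd⟩ := chainQ i x y hpath
    refine ⟨⟨S, hS, hxS, hyS⟩, ?_⟩
    have hclfin : ((Subgroup.closure
        ((fun b => x.1⁻¹ * b * x.1) '' (i.1 : Set G) ∩ {z : G | d 1 z ≤ ρ}) : Subgroup G) :
        Set G).Finite := by
      have hle : Subgroup.closure
          ((fun b => x.1⁻¹ * b * x.1) '' (i.1 : Set G) ∩ {z : G | d 1 z ≤ ρ})
          ≤ Subgroup.map (MulAut.conj x.1⁻¹).toMonoidHom i.1 := by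
        rw [Subgroup.closure_le]
        intro a ha
        obtain ⟨⟨b, hb, rfl⟩, _⟩ := ha
        refine ⟨b, hb, ?_⟩
        show x.1⁻¹ * b * x.1⁻¹⁻¹ = x.1⁻¹ * b * x.1
        rw [inv_inv]
      refine Set.Finite.subset ?_ hle
      rw [Subgroup.coe_map]
      exact i.2.image _
    have hD : d 1 (x.1⁻¹ * f * x.1) ≤ D₀ :=
      hD₀bound _ Set.inter_subset_right hclfin _ hfcl
    have e2 : d x.1 (f * x.1) = d 1 (x.1⁻¹ * f * x.1) := by
      have := hli x.1 1 (x.1⁻¹ * f * x.1)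
      rw [← this]
      congr 1
      · exact (mul_one _).symm
      · group
    have t : d x.1 y.1 ≤ d x.1 (f * x.1) + d (f * x.1) y.1 := hm.triangle _ _ _
    rw [e2] at t
    rw [hDc]
    linarith
  -- assemble the decomposition into chain components
  refine ⟨fun i => {P | ∃ x, P = comp i x}, fun i => (∅ : Set (Set ((EFam d C).spc i))),
    ?_, ?_, ?_, ?_, ?_, ?_, ?_⟩
  · intro i x
    exact Or.inl ⟨comp i x, ⟨x, rfl⟩, Relation.ReflTransGen.refl⟩
  · rintro i g P ⟨x, rfl⟩
    refine ⟨(EFam d C).act i g x, ?_⟩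
    have hact : ∀ a b : (EFam d C).spc i, R i a b →
        R i ((EFam d C).act i g a) ((EFam d C).act i g b) := by
      intro a b hab
      show (EFam d C).dist i _ _ ≤ r
      erw [EFam_dist_act hm hli hinv i _ a b]
      exact hab
    have hact' : ∀ a b : (EFam d C).spc i, R i a b →
        R i ((EFam d C).act i (g⁻¹ : ↥i.1) a) ((EFam d C).act i (g⁻¹ : ↥i.1) b) := by
      intro a b hab
      show (EFam d C).dist i _ _ ≤ r
      erw [EFam_dist_act hm hli hinv i _ a b]
      exact hab
    ext z
    constructor
    · rintro ⟨w, hw, rfl⟩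
      exact Relation.ReflTransGen.lift _ hact _ _ hw
    · intro hz
      have hz' : Relation.ReflTransGen (R i)
          ((EFam d C).act i (g⁻¹ : ↥i.1) ((EFam d C).act i g x))
          ((EFam d C).act i (g⁻¹ : ↥i.1) z) :=
        Relation.ReflTransGen.lift _ hact' _ _ hz
      have hxx : (EFam d C).act i (g⁻¹ : ↥i.1) ((EFam d C).act i g x) = x := by
        have := EFam_act_act_inv hinv i (g⁻¹ : ↥i.1) x
        erw [inv_inv] at this
        exact this
      rw [hxx] at hz'
      exact ⟨(EFam d C).act i (g⁻¹ : ↥i.1) z, hz', EFam_act_act_inv hinv i g z⟩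
  · rintro i g P hP
    exact absurd hP (Set.notMem_empty P)
  · rintro i P ⟨x, rfl⟩ P' ⟨x', rfl⟩ hne u hu v hv
    by_contra hcon
    have hRuv : R i u v := le_of_not_gt hcon
    have compeq : ∀ (a : (EFam d C).spc i) (b), b ∈ comp i a → comp i a = comp i b := by
      intro a b hb
      ext w
      constructor
      · intro hw
        exact Relation.ReflTransGen.trans ((@Relation.ReflTransGen.stdSymm _ _ ⟨fun _ _ h => Rsymm i h⟩).symm _ _ hb) hw
      · intro hw
        exact Relation.ReflTransGen.trans hb hw
    have e1 : comp i x = comp i u := compeq x u hu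
    have e2 : comp i x' = comp i v := compeq x' v hv
    have e3 : comp i u = comp i v := compeq u v (Relation.ReflTransGen.single hRuv)
    exact hne (e1.trans (e3.trans e2.symm))
  · rintro i P hP
    exact absurd hP (Set.notMem_empty P)
  · -- the component family is semibounded
    rw [EquivFDCClass_zero]
    refine ⟨ENNReal.ofReal Dc + 1, by simp, ?_⟩
    intro i x y
    erw [subFam_dist]
    by_cases hc : ∃ P ∈ {P | ∃ x, P = comp i x}, x.1 ∈ P ∧ y.1 ∈ P
    · rw [if_pos hc]
      obtain ⟨P, ⟨w, rfl⟩, hx, hy⟩ := hc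
      have hxy : Relation.ReflTransGen (R i) x.1 y.1 :=
        Relation.ReflTransGen.trans ((@Relation.ReflTransGen.stdSymm _ _ ⟨fun _ _ h => Rsymm i h⟩).symm _ _ hx) hy
      obtain ⟨hshared, hd⟩ := bndQ i x.1 y.1 hxy
      left
      have : (EFam d C).dist i x.1 y.1 = ENNReal.ofReal (d x.1.1 y.1.1) := by
        show (if ∃ S ∈ C i, x.1.1 ∈ S ∧ y.1.1 ∈ S then _ else ⊤) = _
        rw [if_pos hshared]
      rw [this]
      calc ENNReal.ofReal (d x.1.1 y.1.1) ≤ ENNReal.ofReal Dc := ENNReal.ofReal_le_ofReal hd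
        _ < ENNReal.ofReal Dc + 1 := ENNReal.lt_add_right ENNReal.ofReal_ne_top one_ne_zero
    · rw [if_neg hc]
      exact Or.inr rfl
  · -- the empty family is semibounded
    rw [EquivFDCClass_zero]
    refine ⟨1, ENNReal.one_ne_top, ?_⟩
    rintro i ⟨x, S, hS, _⟩
    exact absurd hS (Set.notMem_empty S)

end Base

end EqFDCAux
namespace EqFDCAux

open scoped Classical

section Sat

variable {G : Type} [Group G] (d : G → G → ℝ) (C : Conf G)

/-- The saturation of a piece `T ⊆ S` of a member of `QF d C` under the subgroup action. -/
def satSet (i : Idx G) (S : ↥(C i)) (T : Set (↥(S.1 : Set G))) : Set G :=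
  {g : G | ∃ h ∈ i.1, ∃ t ∈ T, g = h * (t : ↥(S.1 : Set G)).1}

/-- The configuration of saturations of the pieces of a decomposition of `QF d C`. -/
def satC (𝒲 : ∀ q : (QF d C).idx, Set (Set ((QF d C).spc q))) : Conf G :=
  fun i => {A : Set G | ∃ S : ↥(C i), ∃ T ∈ 𝒲 ⟨i, S⟩, A = satSet C i S T}

variable {C}
variable (𝒲 : ∀ q : (QF d C).idx, Set (Set ((QF d C).spc q)))

lemma satC_inv : ConfInv (satC d C 𝒲) := by
  rintro i A ⟨S, T, hT, rfl⟩ h hh g ⟨h', hh', t, ht, rfl⟩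
  exact ⟨h * h', i.1.mul_mem hh hh', t, ht, (mul_assoc _ _ _).symm⟩

lemma satC_ref (hinv : ConfInv C) :
    ∀ i : Idx G, ∀ A ∈ satC d C 𝒲 i, ∃ S ∈ C i, A ⊆ S := by
  rintro i A ⟨S, T, hT, rfl⟩
  refine ⟨S.1, S.2, ?_⟩
  rintro g ⟨h, hh, t, ht, rfl⟩
  exact hinv i S.1 S.2 h hh t.1 t.2

lemma satC_disj (hm : IsPseudoMetric d) (hli : IsLeftInvariant d) (hinv : ConfInv C)
    (hdisj : ConfDisj C) {rn : ℝ} (hrn : 0 < rn)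
    (h𝒲 : ∀ q, RDisjointCollection ((QF d C).dist q) rn (𝒲 q)) :
    ConfDisj (satC d C 𝒲) := by
  rintro i A hA A' hA' g hgA hgA'
  obtain ⟨S, T, hT, rfl⟩ := hA
  obtain ⟨S', T', hT', rfl⟩ := hA'
  obtain ⟨SS, hSS, hsub⟩ := satC_ref d 𝒲 hinv i _ ⟨S, T, hT, rfl⟩
  obtain ⟨SS', hSS', hsub'⟩ := satC_ref d 𝒲 hinv i _ ⟨S', T', hT', rfl⟩
  -- in fact SS = S.1 and SS' = S'.1 by construction, but we only need membership
  obtain ⟨h, hh, t, ht, hgeq⟩ := hgA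
  obtain ⟨h', hh', t', ht', hgeq'⟩ := hgA'
  have htS : t.1 ∈ S.1 := t.2
  have ht'S : t'.1 ∈ S'.1 := t'.2
  have hgS : g ∈ S.1 := by
    rw [hgeq]; exact hinv i S.1 S.2 h hh t.1 t.2
  have hgS' : g ∈ S'.1 := by
    rw [hgeq']; exact hinv i S'.1 S'.2 h' hh' t'.1 t'.2
  have hSeq : S.1 = S'.1 := hdisj i S.1 S.2 S'.1 S'.2 g hgS hgS'
  have hSeq' : S = S' := Subtype.ext hSeq
  subst hSeq'
  by_cases hTT : T = T'
  · subst hTT; rfl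
  · exfalso
    have hq : rn < quotDist d i.1 t.1 t'.1 :=
      h𝒲 ⟨i, S⟩ T hT T' hT' hTT t ht t' ht'
    have : quotDist d i.1 t.1 t'.1 = 0 := by
      have e1 : quotDist d i.1 (h * t.1) (h' * t'.1) = quotDist d i.1 t.1 t'.1 := by
        rw [quotDist_mul_left d i.1 h hh, quotDist_mul_right d hli i.1 h' hh']
      rw [← e1, ← hgeq, ← hgeq', quotDist_self d hm]
    rw [this] at hq
    exact absurd hq (not_lt_of_ge (le_of_lt hrn))

lemma satC_fdc (hli : IsLeftInvariant d) (β : Ordinal)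
    (h : FDCClass β ((QF d C).ofPieces 𝒲)) : FDCClass β (QF d (satC d C 𝒲)) := by
  have hsel : ∀ (q : (QF d (satC d C 𝒲)).idx),
      ∃ (S : ↥(C q.1)), ∃ T ∈ 𝒲 ⟨q.1, S⟩, (q.2.1 : Set G) = satSet C q.1 S T :=
    fun q => q.2.2
  choose Ssel Tsel hTmem hTeq using hsel
  have hsel2 : ∀ (q : (QF d (satC d C 𝒲)).idx) (a : (QF d (satC d C 𝒲)).spc q),
      ∃ (t : (QF d C).spc ⟨q.1, Ssel q⟩), t ∈ Tsel q ∧ ∃ h ∈ q.1.1, a.1 = h * t.1 := by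
    intro q a
    have ha : (a.1 : G) ∈ satSet C q.1 (Ssel q) (Tsel q) := by
      rw [← hTeq q]; exact a.2
    obtain ⟨h, hh, t, ht, heq⟩ := ha
    exact ⟨t, ht, h, hh, heq⟩
  choose tsel htmem hsel3 using hsel2
  refine fdc_pullback β ((QF d C).ofPieces 𝒲) _
    (fun q => ⟨⟨q.1, Ssel q⟩, ⟨Tsel q, hTmem q⟩⟩)
    (fun q a => ⟨tsel q a, htmem q a⟩) ?_ h
  intro q a a'
  obtain ⟨h1, hh1, he1⟩ := hsel3 q a
  obtain ⟨h2, hh2, he2⟩ := hsel3 q a'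
  show quotDist d q.1.1 (tsel q a).1 (tsel q a').1 = quotDist d q.1.1 a.1 a'.1
  rw [he1, he2, quotDist_mul_left d q.1.1 h1 hh1, quotDist_mul_right d hli q.1.1 h2 hh2]

end Sat

end EqFDCAux
namespace EqFDCAux

open scoped Classical

section Pull

variable {G : Type} [Group G] (d : G → G → ℝ) (C D : Conf G)

/-- The pieces of the disjoint union member of `EFam d C` obtained by pulling back the
pieces of a refining configuration `D`. -/
def pullC : ∀ i : Idx G, Set (Set ((EFam d C).spc i)) :=
  fun i => {P | ∃ A ∈ D i, P = (Subtype.val ⁻¹' A : Set ((EFam d C).spc i))}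

variable {C D}

lemma pull_inv (hinv : ConfInv C) (hinvD : ConfInv D) :
    ∀ (i : Idx G) (g : ↥i.1), ∀ P ∈ pullC d C D i,
      (EFam d C).act i g '' P ∈ pullC d C D i := by
  rintro i g P ⟨A, hA, rfl⟩
  refine ⟨A, hA, ?_⟩
  ext z
  constructor
  · rintro ⟨x, hx, rfl⟩
    show ((EFam d C).act i g x).1 ∈ A
    rw [EFam_act_eq hinv]
    exact hinvD i A hA (g : G) g.2 x.1 hx
  · intro hz
    refine ⟨(EFam d C).act i (g⁻¹ : ↥i.1) z, ?_, EFam_act_act_inv hinv i g z⟩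
    show ((EFam d C).act i (g⁻¹ : ↥i.1) z).1 ∈ A
    rw [EFam_act_eq hinv]
    exact hinvD i A hA (((g⁻¹ : ↥i.1)) : G) (g⁻¹ : ↥i.1).2 z.1 hz

lemma pull_ref (hrefD : ∀ i : Idx G, ∀ A ∈ D i, ∃ S ∈ C i, A ⊆ S) :
    ∀ (i : Idx G) (z : G), (∃ A ∈ D i, z ∈ A) → ∃ S ∈ C i, z ∈ S := by
  rintro i z ⟨A, hA, hz⟩
  obtain ⟨S, hS, hsub⟩ := hrefD i A hA
  exact ⟨S, hS, hsub hz⟩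

lemma pull_class (hinv : ConfInv C)
    (hrefD : ∀ i : Idx G, ∀ A ∈ D i, ∃ S ∈ C i, A ⊆ S)
    (hinvD : ConfInv D) (δ : Ordinal) (h : EquivFDCClass δ (EFam d D)) :
    EquivFDCClass δ ((EFam d C).subFam (pullC d C D)) := by
  refine equiv_transfer δ (Idx G) (fun i => ↥i.1)
    ((EFam d D).spc) (((EFam d C).subFam (pullC d C D)).spc)
    ((EFam d D).dist) ((((EFam d C).subFam (pullC d C D))).dist)
    ((EFam d D).act) ((((EFam d C).subFam (pullC d C D))).act)
    (fun i => ⟨fun x => ⟨x.1.1, ?_⟩, fun z => ⟨⟨z.1, ?_⟩, ?_⟩, ?_, ?_⟩) ?_ ?_ h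
  · obtain ⟨P, ⟨A, hA, rfl⟩, hmm⟩ := x.2
    exact ⟨A, hA, hmm⟩
  · exact pull_ref hrefD i z.1 z.2
  · obtain ⟨A, hA, hz⟩ := z.2
    exact ⟨Subtype.val ⁻¹' A, ⟨A, hA, rfl⟩, hz⟩
  · intro x
    apply Subtype.ext
    apply Subtype.ext
    rfl
  · intro z
    apply Subtype.ext
    rfl
  · -- distances agree
    intro i x y
    erw [subFam_dist]
    show (if ∃ A ∈ D i, x.1.1 ∈ A ∧ y.1.1 ∈ A then ENNReal.ofReal (d x.1.1 y.1.1) else ⊤)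
      = (if ∃ S ∈ pullC d C D i, x.1 ∈ S ∧ y.1 ∈ S then (EFam d C).dist i x.1 y.1 else ⊤)
    by_cases hc : ∃ A ∈ D i, x.1.1 ∈ A ∧ y.1.1 ∈ A
    · rw [if_pos hc]
      obtain ⟨A, hA, h1, h2⟩ := hc
      rw [if_pos ⟨Subtype.val ⁻¹' A, ⟨A, hA, rfl⟩, h1, h2⟩]
      obtain ⟨S, hS, hsub⟩ := hrefD i A hA
      show _ = (if ∃ S ∈ C i, x.1.1 ∈ S ∧ y.1.1 ∈ S then ENNReal.ofReal (d x.1.1 y.1.1) else ⊤)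
      rw [if_pos ⟨S, hS, hsub h1, hsub h2⟩]
    · rw [if_neg hc, if_neg ?_]
      rintro ⟨P, ⟨A, hA, rfl⟩, h1, h2⟩
      exact hc ⟨A, hA, h1, h2⟩
  · -- actions agree
    intro i g x
    apply Subtype.ext
    have hinvD' := hinvD
    have hsubpos : ∃ P ∈ pullC d C D i, (EFam d C).act i g x.1 ∈ P := by
      obtain ⟨P, ⟨A, hA, rfl⟩, hmm⟩ := x.2
      refine ⟨Subtype.val ⁻¹' A, ⟨A, hA, rfl⟩, ?_⟩
      show ((EFam d C).act i g x.1).1 ∈ A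
      rw [EFam_act_eq hinv]
      exact hinvD i A hA (g : G) g.2 x.1.1 hmm
    show (((EFam d C).subFam (pullC d C D)).act i g x).1.1
      = ((EFam d D).act i g ⟨x.1.1, _⟩).1
    erw [subFam_act_pos _ _ _ _ _ hsubpos, EFam_act_eq hinv, EFam_act_eq hinvD]

lemma pull_disj (hm : IsPseudoMetric d) (hli : IsLeftInvariant d) (hinv : ConfInv C)
    (hdisj : ConfDisj C) (𝒲 : ∀ q : (QF d C).idx, Set (Set ((QF d C).spc q)))
    {rn : ℝ} (h𝒲 : ∀ q, RDisjointCollection ((QF d C).dist q) rn (𝒲 q))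
    {r : ENNReal} (hrT : r ≠ ⊤) (hrrn : r < ENNReal.ofReal rn) :
    ∀ i : Idx G, ∀ P ∈ pullC d C (satC d C 𝒲) i, ∀ P' ∈ pullC d C (satC d C 𝒲) i,
      P ≠ P' → ∀ x ∈ P, ∀ y ∈ P', r < (EFam d C).dist i x y := by
  rintro i P ⟨A, hA, rfl⟩ P' ⟨A', hA', rfl⟩ hne x hx y hy
  have hAne : A ≠ A' := by rintro rfl; exact hne rfl
  obtain ⟨S, T, hT, hAeq⟩ := hA
  obtain ⟨S', T', hT', hA'eq⟩ := hA'
  have hxS : x.1 ∈ S.1 := by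
    obtain ⟨SS, hSS, hsub⟩ := satC_ref d 𝒲 hinv i A ⟨S, T, hT, hAeq⟩
    -- from the explicit description, A ⊆ S.1
    subst hAeq
    obtain ⟨h, hh, t, ht, heq⟩ := hx
    rw [heq]
    exact hinv i S.1 S.2 h hh t.1 t.2
  have hyS : y.1 ∈ S'.1 := by
    subst hA'eq
    obtain ⟨h, hh, t, ht, heq⟩ := hy
    rw [heq]
    exact hinv i S'.1 S'.2 h hh t.1 t.2
  by_cases hSS : S = S'
  · -- same member: use the disjointness of the decomposition downstairs
    subst hSS
    have hTT : T ≠ T' := by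
      rintro rfl
      exact hAne (hAeq.trans hA'eq.symm)
    have hx' : x.1 ∈ satSet C i S T := hAeq ▸ hx
    have hy' : y.1 ∈ satSet C i S T' := hA'eq ▸ hy
    obtain ⟨h1, hh1, t1, ht1, heq1⟩ := hx'
    obtain ⟨h2, hh2, t2, ht2, heq2⟩ := hy'
    have hqlt : rn < quotDist d i.1 t1.1 t2.1 := h𝒲 ⟨i, S⟩ T hT T' hT' hTT t1 ht1 t2 ht2
    have heqq : quotDist d i.1 x.1 y.1 = quotDist d i.1 t1.1 t2.1 := by
      rw [heq1, heq2, quotDist_mul_left d i.1 h1 hh1, quotDist_mul_right d hli i.1 h2 hh2]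
    have hdlt : rn < d x.1 y.1 :=
      lt_of_lt_of_le (heqq ▸ hqlt) (quotDist_le d hm i.1 x.1 y.1)
    show r < (EFam d C).dist i x y
    have : (EFam d C).dist i x y = ENNReal.ofReal (d x.1 y.1) := by
      show (if ∃ SS ∈ C i, x.1 ∈ SS ∧ y.1 ∈ SS then _ else ⊤) = _
      rw [if_pos ⟨S.1, S.2, hxS, hyS⟩]
    rw [this]
    exact lt_of_lt_of_le hrrn (ENNReal.ofReal_le_ofReal (le_of_lt hdlt))
  · -- different members: the two points share no piece of `C i`, distance is ∞
    have hcond : ¬ ∃ SS ∈ C i, x.1 ∈ SS ∧ y.1 ∈ SS := by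
      rintro ⟨SS, hSSm, h1, h2⟩
      have e1 : SS = S.1 := hdisj i SS hSSm S.1 S.2 x.1 h1 hxS
      have e2 : SS = S'.1 := hdisj i SS hSSm S'.1 S'.2 y.1 h2 hyS
      exact hSS (Subtype.ext (e1 ▸ e2))
    show r < (EFam d C).dist i x y
    have : (EFam d C).dist i x y = ⊤ := by
      show (if ∃ SS ∈ C i, x.1 ∈ SS ∧ y.1 ∈ SS then _ else ⊤) = ⊤
      rw [if_neg hcond]
    rw [this]
    exact lt_top_iff_ne_top.mpr hrT

end Pull

end EqFDCAux
namespace EqFDCAux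

open scoped Classical

section Main

variable {G : Type} [Group G] {d : G → G → ℝ}

theorem main (hm : IsPseudoMetric d) (hli : IsLeftInvariant d) (hp : IsProper d) :
    ∀ γ : Ordinal, ∀ C : Conf G, ConfInv C → ConfDisj C → FDCClass γ (QF d C) →
      ∃ δ : Ordinal, EquivFDCClass δ (EFam d C) := by
  intro γ
  induction γ using Ordinal.limitRecOn with
  | zero =>
    intro C hinv hdisj h
    rw [FDCClass_zero] at h
    obtain ⟨B, hB⟩ := h
    exact ⟨1, base hm hli hp hinv hdisj B hB⟩
  | add_one β IH =>
    rw [Ordinal.add_one_eq_succ]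
    intro C hinv hdisj h
    rw [FDCClass_succ] at h
    choose 𝒰Q 𝒱Q hcov hdU hdV hCU hCV using
      fun n : ℕ => h ((n : ℝ) + 1) (by positivity)
    have hEU : ∀ n : ℕ, ∃ δ : Ordinal, EquivFDCClass δ (EFam d (satC d C (𝒰Q n))) :=
      fun n => IH (satC d C (𝒰Q n)) (satC_inv d (𝒰Q n))
        (satC_disj d (𝒰Q n) hm hli hinv hdisj (by positivity) (hdU n))
        (satC_fdc d (𝒰Q n) hli β (hCU n))
    have hEV : ∀ n : ℕ, ∃ δ : Ordinal, EquivFDCClass δ (EFam d (satC d C (𝒱Q n))) :=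
      fun n => IH (satC d C (𝒱Q n)) (satC_inv d (𝒱Q n))
        (satC_disj d (𝒱Q n) hm hli hinv hdisj (by positivity) (hdV n))
        (satC_fdc d (𝒱Q n) hli β (hCV n))
    choose δU hδU using hEU
    choose δV hδV using hEV
    set δs : Ordinal := ⨆ n : ℕ, max (δU n) (δV n) with hδs
    have hδsU : ∀ n, δU n ≤ δs :=
      fun n => le_trans (le_max_left _ _) (le_ciSup (Ordinal.bddAbove_range _) n)
    have hδsV : ∀ n, δV n ≤ δs :=
      fun n => le_trans (le_max_right _ _) (le_ciSup (Ordinal.bddAbove_range _) n)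
    refine ⟨δs + 1, ?_⟩
    rw [show δs + 1 = Order.succ δs from Ordinal.add_one_eq_succ δs, EquivFDCClass_succ]
    intro r hr hrT
    set n : ℕ := ⌈r.toReal⌉₊ with hn
    have hrlt : r < ENNReal.ofReal ((n : ℝ) + 1) := by
      conv_lhs => rw [← ENNReal.ofReal_toReal hrT]
      exact (ENNReal.ofReal_lt_ofReal_iff (by positivity)).mpr
        (lt_of_le_of_lt (Nat.le_ceil _) (lt_add_one _))
    refine ⟨pullC d C (satC d C (𝒰Q n)), pullC d C (satC d C (𝒱Q n)), ?_,
      pull_inv d hinv (satC_inv d (𝒰Q n)), pull_inv d hinv (satC_inv d (𝒱Q n)),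
      pull_disj d hm hli hinv hdisj (𝒰Q n) (hdU n) hrT hrlt,
      pull_disj d hm hli hinv hdisj (𝒱Q n) (hdV n) hrT hrlt,
      pull_class d hinv (satC_ref d (𝒰Q n) hinv) (satC_inv d (𝒰Q n)) δs
        (equiv_mono δs (δU n) (hδsU n) _ (EFam_act_surj (satC_inv d (𝒰Q n))) (hδU n)),
      pull_class d hinv (satC_ref d (𝒱Q n) hinv) (satC_inv d (𝒱Q n)) δs
        (equiv_mono δs (δV n) (hδsV n) _ (EFam_act_surj (satC_inv d (𝒱Q n))) (hδV n))⟩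
    -- coverage
    intro i x
    obtain ⟨S, hS, hxS⟩ := x.2
    rcases hcov n ⟨i, ⟨S, hS⟩⟩ ⟨x.1, hxS⟩ with ⟨T, hT, hpT⟩ | ⟨T, hT, hpT⟩
    · refine Or.inl ⟨Subtype.val ⁻¹' (satSet C i ⟨S, hS⟩ T),
        ⟨satSet C i ⟨S, hS⟩ T, ⟨⟨S, hS⟩, T, hT, rfl⟩, rfl⟩, ?_⟩
      exact ⟨1, i.1.one_mem, ⟨x.1, hxS⟩, hpT, (one_mul _).symm⟩
    · refine Or.inr ⟨Subtype.val ⁻¹' (satSet C i ⟨S, hS⟩ T),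
        ⟨satSet C i ⟨S, hS⟩ T, ⟨⟨S, hS⟩, T, hT, rfl⟩, rfl⟩, ?_⟩
      exact ⟨1, i.1.one_mem, ⟨x.1, hxS⟩, hpT, (one_mul _).symm⟩
  | limit o ho IH =>
    intro C hinv hdisj h
    rw [FDCClass_limit ho] at h
    obtain ⟨β, hβ, hh⟩ := h
    exact IH β hβ C hinv hdisj hh

end Main

end EqFDCAux

/-- Let `G` be a group with a proper left-invariant metric such that the
metric family `{H\G}_{H ∈ Fin}` has finite decomposition complexity. Then the equivariant
metric family `{(G,H)}_{H ∈ Fin}`, where each finite subgroup `H` acts on `G` by left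
multiplication, has equivariant finite decomposition complexity. -/
theorem equivariant_FDC_of_quotFamily_FDC
    (G : Type) [Group G] (d : G → G → ℝ)
    (hm : IsPseudoMetric d) (hsep : ∀ x y, d x y = 0 → x = y)
    (hli : IsLeftInvariant d) (hp : IsProper d)
    (hfdc : HasFDC (quotFamily G d)) :
    HasEquivFDC
      { idx := {H : Subgroup G // (H : Set G).Finite}
        grp := fun H => ↥H.1
        spc := fun _ => G
        dist := fun _ x y => ENNReal.ofReal (d x y)
        act := fun _ h x => (h : G) * x } := by
  classical
  open EqFDCAux in
  obtain ⟨γ, hγ⟩ := hfdc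
  set C₀ : Conf G := fun _ => ({Set.univ} : Set (Set G)) with hC₀
  have hinv₀ : ConfInv C₀ := by
    intro i S hS h hh g hg
    rw [Set.mem_singleton_iff] at hS
    subst hS
    trivial
  have hdisj₀ : ConfDisj C₀ := by
    intro i S hS T hT g _ _
    rw [Set.mem_singleton_iff] at hS hT
    rw [hS, hT]
  have hQ : FDCClass γ (QF d C₀) := by
    refine fdc_pullback γ (quotFamily G d) (QF d C₀) (fun q => q.1)
      (fun q x => x.1) ?_ hγ
    intro q x y
    rfl
  obtain ⟨δ, hδ⟩ := main hm hli hp γ C₀ hinv₀ hdisj₀ hQ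
  refine ⟨δ, ?_⟩
  refine equiv_transfer δ (Idx G) (fun i => ↥i.1)
    ((EFam d C₀).spc) (fun _ => G)
    ((EFam d C₀).dist) (fun _ x y => ENNReal.ofReal (d x y))
    ((EFam d C₀).act) (fun _ h x => (h : G) * x)
    (fun i => ⟨fun x => ⟨x, Set.univ, rfl, trivial⟩, fun z => z.1,
      fun x => rfl, fun z => Subtype.ext rfl⟩) ?_ ?_ hδ
  · intro i x y
    show (if ∃ S ∈ C₀ i, x ∈ S ∧ y ∈ S then ENNReal.ofReal (d x y) else ⊤)
      = ENNReal.ofReal (d x y)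
    rw [if_pos ⟨Set.univ, rfl, trivial, trivial⟩]
  · intro i g x
    rw [EFam_act_eq hinv₀]
    rfl
end

section
/- Let G be a group equipped with a proper left-invariant metric. Then the family of all finite subgroups of G, each regarded as a metric subspace of G, has asymptotic dimension zero uniformly: for every R > 0 there exists s_R < ∞ such that every finite subgroup F of G admits an R-disjoint decomposition into subsets of diameter at most s_R (namely, the cosets of the subgroup of F generated by F ∩ B_R(e)). -/
open Matrix

/-- Let `G` be a group with a proper left-invariant metric. Then for
every `R > 0` there is `s` such that every finite subgroup `F` of `G` decomposes
`R`-disjointly into the cosets of the subgroup of `F` generated by `F ∩ B_R(e)`, each of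
diameter at most `s`; in particular the family of finite subgroups of `G` has asymptotic
dimension zero uniformly. -/
theorem finite_subgroups_asdim_zero_uniformly
    (G : Type) [Group G] (d : G → G → ℝ)
    (hm : IsPseudoMetric d) (hsep : ∀ x y, d x y = 0 → x = y)
    (hli : IsLeftInvariant d) (hp : IsProper d) :
    ∀ R : ℝ, 0 < R → ∃ s : ℝ, ∀ F : Subgroup G, (F : Set G).Finite →
      ∀ C : G → Set G,
        C = (fun g => (fun h => g * h) ''
              ((Subgroup.closure ((F : Set G) ∩ {x : G | d 1 x ≤ R}) : Subgroup G) : Set G)) →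
        (∀ x ∈ (F : Set G), ∃ g ∈ (F : Set G), x ∈ C g) ∧
        (∀ g ∈ (F : Set G), ∀ g' ∈ (F : Set G), C g ≠ C g' →
          ∀ x ∈ C g, ∀ y ∈ C g', R < d x y) ∧
        (∀ g ∈ (F : Set G), ∀ x ∈ C g, ∀ y ∈ C g, d x y ≤ s) := by

  intro R hR
  classical
  have hB : {x : G | d 1 x ≤ R}.Finite := hp 1 R
  set B := {x : G | d 1 x ≤ R} with hBdef
  set U : Set G := ⋃ S ∈ {t : Set G | t ⊆ B},
    (if (((Subgroup.closure S : Subgroup G)) : Set G).Finite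
      then (((Subgroup.closure S : Subgroup G)) : Set G) else ∅) with hUdef
  have hUfin : U.Finite := by
    refine Set.Finite.biUnion hB.finite_subsets ?_
    intro S hS
    split
    · assumption
    · exact Set.finite_empty
  have hDfin : (Set.image2 d U U).Finite := hUfin.image2 d hUfin
  obtain ⟨s, hs⟩ := hDfin.bddAbove
  refine ⟨s, ?_⟩
  intro F hF C hC
  set H : Subgroup G := Subgroup.closure ((F : Set G) ∩ B) with hHdef
  have hHF : H ≤ F := (Subgroup.closure_le F).mpr Set.inter_subset_left
  have hHfin : ((H : Subgroup G) : Set G).Finite := hF.subset hHF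
  have hHU : ((H : Subgroup G) : Set G) ⊆ U := by
    intro x hx
    rw [hUdef]
    refine Set.mem_biUnion (show ((F : Set G) ∩ B) ∈ {t : Set G | t ⊆ B} from
      Set.inter_subset_right) ?_
    rw [if_pos hHfin]
    exact hx
  have hCg : ∀ g : G, C g = (fun h => g * h) '' ((H : Subgroup G) : Set G) := by
    intro g; rw [hC]
  have key : ∀ a b : G, b ∈ (fun h => a * h) '' ((H : Subgroup G) : Set G) →
      (fun h => a * h) '' ((H : Subgroup G) : Set G)
        = (fun h => b * h) '' ((H : Subgroup G) : Set G) := by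
    rintro a b ⟨h, hh, rfl⟩
    ext z
    constructor
    · rintro ⟨k, hk, rfl⟩
      exact ⟨h⁻¹ * k, H.mul_mem (H.inv_mem hh) hk, by group⟩
    · rintro ⟨k, hk, rfl⟩
      exact ⟨h * k, H.mul_mem hh hk, by group⟩
  refine ⟨?_, ?_, ?_⟩
  · intro x hx
    refine ⟨x, hx, ?_⟩
    rw [hCg]
    exact ⟨1, H.one_mem, mul_one x⟩
  · intro g hg g' hg' hne x hx y hy
    by_contra hcon
    push_neg at hcon
    rw [hCg] at hx hy
    obtain ⟨h1, hh1, rfl⟩ := hx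
    obtain ⟨h2, hh2, rfl⟩ := hy
    set x := g * h1
    set y := g' * h2
    have hxy : d x y = d 1 (x⁻¹ * y) := by
      have := hli x 1 (x⁻¹ * y)
      simpa using this
    have hxF : x ∈ (F : Set G) := F.mul_mem hg (hHF hh1)
    have hyF : y ∈ (F : Set G) := F.mul_mem hg' (hHF hh2)
    have hmem : x⁻¹ * y ∈ ((H : Subgroup G) : Set G) := by
      apply Subgroup.subset_closure
      refine ⟨F.mul_mem (F.inv_mem hxF) hyF, ?_⟩
      show d 1 (x⁻¹ * y) ≤ R
      rw [← hxy]
      exact hcon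
    have hyCg : y ∈ (fun h => g * h) '' ((H : Subgroup G) : Set G) :=
      ⟨h1 * (x⁻¹ * y), H.mul_mem hh1 hmem, by simp [x, mul_assoc]⟩
    have hyCg' : y ∈ (fun h => g' * h) '' ((H : Subgroup G) : Set G) :=
      ⟨h2, hh2, rfl⟩
    apply hne
    rw [hCg, hCg, key g y hyCg, key g' y hyCg']
  · intro g hg x hx y hy
    rw [hCg] at hx hy
    obtain ⟨h1, hh1, rfl⟩ := hx
    obtain ⟨h2, hh2, rfl⟩ := hy
    have : d (g * h1) (g * h2) = d h1 h2 := hli g h1 h2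
    rw [this]
    exact hs (Set.mem_image2_of_mem (hHU hh1) (hHU hh2))
end

section
/- Let G be a group equipped with a proper left-invariant metric. Then the family {F\F'}, where F ≤ F' ranges over all pairs of finite subgroups of G and F\F' carries the quotient pseudometric, has asymptotic dimension zero uniformly. -/
open Matrix

/-- Let `G` be a group with a proper left-invariant metric. Then the
family `{F\F'}`, where `F ≤ F'` ranges over all pairs of finite subgroups of `G` and
`F\F'` carries the quotient pseudometric, has asymptotic dimension zero uniformly. -/
theorem pairs_finite_subgroups_quotients_asdim_zero
    (G : Type) [Group G] (d : G → G → ℝ)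
    (hm : IsPseudoMetric d) (hsep : ∀ x y, d x y = 0 → x = y)
    (hli : IsLeftInvariant d) (hp : IsProper d) :
    UniformAsdimLE
      (fun P : {P : Subgroup G × Subgroup G // P.1 ≤ P.2 ∧ (P.2 : Set G).Finite} => ↥P.1.2)
      (fun P x y => ⨅ f : ↥P.1.1, d ((f : G) * (x : G)) (y : G)) 0 := by
  intro r hr
  classical
  set S : Set G := {g : G | d 1 g ≤ r} with hSdef
  have hSfin : S.Finite := hp 1 r
  set 𝒦 : Set G :=
    ⋃ T ∈ {T : Set G | T ⊆ S ∧ ((Subgroup.closure T : Subgroup G) : Set G).Finite},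
      ((Subgroup.closure T : Subgroup G) : Set G) with h𝒦def
  have h𝒦fin : 𝒦.Finite := by
    apply Set.Finite.biUnion
    · exact hSfin.finite_subsets.subset (fun T hT => hT.1)
    · intro T hT; exact hT.2
  obtain ⟨B, hB⟩ : ∃ B : ℝ, ∀ x ∈ 𝒦, ∀ y ∈ 𝒦, d x y ≤ B := by
    obtain ⟨B, hB⟩ := (h𝒦fin.image2 d h𝒦fin).bddAbove
    exact ⟨B, fun x hx y hy => hB (Set.mem_image2_of_mem hx hy)⟩
  refine ⟨B, ?_⟩
  rintro ⟨⟨F, F'⟩, hle, hfin⟩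
  haveI hFfin : Finite ↥F := (hfin.subset (fun x hx => hle hx)).to_subtype
  haveI : Nonempty ↥F := ⟨⟨1, F.one_mem⟩⟩
  set K : Subgroup G := Subgroup.closure (S ∩ (F' : Set G)) with hKdef
  have hKle : K ≤ F' := (Subgroup.closure_le F').2 Set.inter_subset_right
  have hK𝒦 : (K : Set G) ⊆ 𝒦 := by
    apply Set.subset_biUnion_of_mem (u := fun T => ((Subgroup.closure T : Subgroup G) : Set G))
    exact ⟨Set.inter_subset_left, hfin.subset hKle⟩
  -- the equivalence relation
  set rel : ↥F' → ↥F' → Prop :=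
    fun x y => ∃ f ∈ F, ∃ k ∈ K, (y : G) = f * x * k with hreldef
  have rel_refl : ∀ x, rel x x := fun x => ⟨1, F.one_mem, 1, K.one_mem, by group⟩
  have rel_symm : ∀ x y, rel x y → rel y x := by
    rintro x y ⟨f, hf, k, hk, hy⟩
    exact ⟨f⁻¹, F.inv_mem hf, k⁻¹, K.inv_mem hk, by rw [hy]; group⟩
  have rel_trans : ∀ x y z, rel x y → rel y z → rel x z := by
    rintro x y z ⟨f, hf, k, hk, hy⟩ ⟨f', hf', k', hk', hz⟩
    exact ⟨f' * f, F.mul_mem hf' hf, k * k', K.mul_mem hk hk', by rw [hz, hy]; group⟩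
  have bdd : ∀ y y' : ↥F', BddBelow (Set.range fun f : ↥F => d ((f : G) * (y : G)) (y' : G)) := by
    intro y y'
    exact ⟨0, by rintro _ ⟨f, rfl⟩; exact hm.nonneg _ _⟩
  -- if quotient distance ≤ r then related
  have key : ∀ y y' : ↥F', (⨅ f : ↥F, d ((f : G) * (y : G)) (y' : G)) ≤ r → rel y y' := by
    intro y y' h
    obtain ⟨f0, hf0⟩ := Finite.exists_min (fun f : ↥F => d ((f : G) * (y : G)) (y' : G))
    have hmin : d ((f0 : G) * (y : G)) (y' : G) ≤ r := le_trans (le_ciInf hf0) h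
    set b : G := ((f0 : G) * (y : G))⁻¹ * (y' : G) with hbdef
    have hb1 : d 1 b ≤ r := by
      have := hli ((f0 : G) * (y : G)) 1 b
      rw [mul_one] at this
      have h2 : (f0 : G) * (y : G) * b = (y' : G) := by rw [hbdef]; group
      rw [h2] at this
      rw [← this]; exact hmin
    have hbF' : b ∈ F' := by
      rw [hbdef]
      exact F'.mul_mem (F'.inv_mem (F'.mul_mem (hle f0.2) y.2)) y'.2
    have hbK : b ∈ K := Subgroup.subset_closure ⟨hb1, hbF'⟩
    exact ⟨(f0 : G), f0.2, b, hbK, by rw [hbdef]; group⟩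
  -- diameter bound
  have diam : ∀ x y y' : ↥F', rel x y → rel x y' →
      (⨅ f : ↥F, d ((f : G) * (y : G)) (y' : G)) ≤ B := by
    rintro x y y' ⟨f, hf, k, hk, hy⟩ ⟨f', hf', k', hk', hy'⟩
    have : (⨅ g : ↥F, d ((g : G) * (y : G)) (y' : G)) ≤
        d ((⟨f' * f⁻¹, F.mul_mem hf' (F.inv_mem hf)⟩ : ↥F) * (y : G)) (y' : G) :=
      ciInf_le (bdd y y') _
    refine le_trans this ?_
    have h1 : (f' * f⁻¹ : G) * (y : G) = f' * ((x : G) * k) := by rw [hy]; group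
    have h2 : (y' : G) = f' * ((x : G) * k') := by rw [hy']; group
    rw [h1, h2, hli, hli]
    exact hB k (hK𝒦 hk) k' (hK𝒦 hk')
  refine ⟨fun _ => {U | ∃ x : ↥F', U = {y | rel x y}}, ?_, ?_, ?_⟩
  · intro x
    exact ⟨0, {y | rel x y}, ⟨x, rfl⟩, rel_refl x⟩
  · rintro k U ⟨x, rfl⟩ V ⟨x', rfl⟩ hUV y hy y' hy'
    by_contra h
    push_neg at h
    have hyy' : rel y y' := key y y' h
    have hxx' : rel x x' := rel_trans _ _ _ hy (rel_trans _ _ _ hyy' (rel_symm _ _ hy'))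
    apply hUV
    ext z
    exact ⟨fun hz => rel_trans _ _ _ (rel_symm _ _ hxx') hz,
           fun hz => rel_trans _ _ _ hxx' hz⟩
  · rintro k U ⟨x, rfl⟩ y hy y' hy'
    exact diam x y y' hy hy'
end

section
/- Let {U_α ∪ V_α}_{α∈A} be a metric family where each member is a union of two subspaces. Then the uniform asymptotic dimension of {U_α ∪ V_α}_{α∈A} equals the maximum of the uniform asymptotic dimensions of the families {U_α}_{α∈A} and {V_α}_{α∈A}. -/
open Matrix

/-- The uniform asymptotic dimension of a metric family, as an extended natural number:
the least `n` such that the family has asymptotic dimension at most `n` uniformly. -/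
noncomputable def uniformAsdim {ι : Type} (X : ι → Type) (d : ∀ i, X i → X i → ℝ) : ℕ∞ :=
  sInf {n : ℕ∞ | ∃ m : ℕ, n = (m : ℕ∞) ∧ UniformAsdimLE X d m}

lemma asdimLE_mono' {ι : Type} {X : ι → Type} {d : ∀ i, X i → X i → ℝ} {m n : ℕ}
    (hmn : m ≤ n) (h : UniformAsdimLE X d m) : UniformAsdimLE X d n := by
  intro r hr
  obtain ⟨B, hB⟩ := h r hr
  refine ⟨B, fun i => ?_⟩
  obtain ⟨𝒰, hcov, hdisj, hbnd⟩ := hB i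
  refine ⟨fun k => if h : (k : ℕ) < m + 1 then 𝒰 ⟨k, h⟩ else ∅, ?_, ?_, ?_⟩
  · intro x
    obtain ⟨k, Uk, hUk, hx⟩ := hcov x
    refine ⟨⟨k, lt_of_lt_of_le k.2 (by omega)⟩, Uk, ?_, hx⟩
    simp only [dif_pos k.2]
    exact hUk
  · intro k Uk hUk Vk hVk hne x hx y hy
    by_cases h : (k : ℕ) < m + 1
    · simp only [dif_pos h] at hUk hVk
      exact hdisj _ _ hUk _ hVk hne x hx y hy
    · simp only [dif_neg h] at hUk; exact absurd hUk (Set.notMem_empty _)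
  · intro k Uk hUk x hx y hy
    by_cases h : (k : ℕ) < m + 1
    · simp only [dif_pos h] at hUk
      exact hbnd _ _ hUk x hx y hy
    · simp only [dif_neg h] at hUk; exact absurd hUk (Set.notMem_empty _)

lemma asdimLE_restrict' {A : Type} {Z : A → Type} {dZ : ∀ a, Z a → Z a → ℝ}
    {S T : ∀ a, Set (Z a)} (hST : ∀ a, S a ⊆ T a) {n : ℕ}
    (h : UniformAsdimLE (fun a => ↥(T a)) (fun a x y => dZ a x.1 y.1) n) :
    UniformAsdimLE (fun a => ↥(S a)) (fun a x y => dZ a x.1 y.1) n := by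
  intro r hr
  obtain ⟨B, hB⟩ := h r hr
  refine ⟨B, fun a => ?_⟩
  obtain ⟨𝒲, hcov, hdisj, hbnd⟩ := hB a
  refine ⟨fun k => (fun W => {x : ↥(S a) | (⟨x.1, hST a x.2⟩ : ↥(T a)) ∈ W}) '' 𝒲 k, ?_, ?_, ?_⟩
  · intro x
    obtain ⟨k, W, hW, hx⟩ := hcov ⟨x.1, hST a x.2⟩
    exact ⟨k, _, ⟨W, hW, rfl⟩, hx⟩
  · rintro k _ ⟨W₁, hW₁, rfl⟩ _ ⟨W₂, hW₂, rfl⟩ hne x hx y hy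
    have hW : W₁ ≠ W₂ := by rintro rfl; exact hne rfl
    exact hdisj k W₁ hW₁ W₂ hW₂ hW _ hx _ hy
  · rintro k _ ⟨W, hW, rfl⟩ x hx y hy
    exact hbnd k W hW _ hx _ hy

lemma asdimLE_union' {A : Type} {Z : A → Type} {dZ : ∀ a, Z a → Z a → ℝ}
    (hZ : ∀ a, IsPseudoMetric (dZ a)) {U V : ∀ a, Set (Z a)} {n : ℕ}
    (hU : UniformAsdimLE (fun a => ↥(U a)) (fun a x y => dZ a x.1 y.1) n)
    (hV : UniformAsdimLE (fun a => ↥(V a)) (fun a x y => dZ a x.1 y.1) n) :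
    UniformAsdimLE (fun a => ↥(U a ∪ V a)) (fun a x y => dZ a x.1 y.1) n := by
  classical
  intro r hr
  obtain ⟨B₁, hB₁⟩ := hU r hr
  set b := max B₁ 0 with hb
  have hb0 : (0:ℝ) ≤ b := le_max_right _ _
  have hB₁b : B₁ ≤ b := le_max_left _ _
  set s := 2 * b + 3 * r with hs
  have hs0 : 0 < s := by rw [hs]; linarith
  obtain ⟨B₂, hB₂⟩ := hV s hs0
  set c := max B₂ 0 with hc
  have hB₂c : B₂ ≤ c := le_max_left _ _
  refine ⟨max b (2 * b + 2 * r + c), fun a => ?_⟩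
  have dsym := (hZ a).symm
  have dtri := (hZ a).triangle
  have drefl := (hZ a).refl
  obtain ⟨𝒰, hUcov, hUdisj, hUbnd⟩ := hB₁ a
  obtain ⟨𝒱, hVcov, hVdisj, hVbnd⟩ := hB₂ a
  set iU : Set ↥(U a) → Set (Z a) := fun S => Subtype.val '' S with hiU
  set iV : Set ↥(V a) → Set (Z a) := fun S => Subtype.val '' S with hiV
  set 𝒰' : Fin (n+1) → Set (Set (Z a)) := fun k => iU '' 𝒰 k with h𝒰'
  set 𝒱' : Fin (n+1) → Set (Set (Z a)) := fun k => iV '' 𝒱 k with h𝒱'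
  have hUdisj' : ∀ k, ∀ P ∈ 𝒰' k, ∀ Q ∈ 𝒰' k, P ≠ Q → ∀ x ∈ P, ∀ y ∈ Q, r < dZ a x y := by
    rintro k P ⟨S, hS, rfl⟩ Q ⟨T, hT, rfl⟩ hne x hx y hy
    obtain ⟨u, hu, rfl⟩ := hx
    obtain ⟨v, hv, rfl⟩ := hy
    have hST : S ≠ T := by rintro rfl; exact hne rfl
    exact hUdisj k S hS T hT hST u hu v hv
  have hUbnd' : ∀ k, ∀ P ∈ 𝒰' k, ∀ x ∈ P, ∀ y ∈ P, dZ a x y ≤ b := by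
    rintro k P ⟨S, hS, rfl⟩ x hx y hy
    obtain ⟨u, hu, rfl⟩ := hx
    obtain ⟨v, hv, rfl⟩ := hy
    exact le_trans (hUbnd k S hS u hu v hv) hB₁b
  have hVdisj' : ∀ k, ∀ P ∈ 𝒱' k, ∀ Q ∈ 𝒱' k, P ≠ Q → ∀ x ∈ P, ∀ y ∈ Q, s < dZ a x y := by
    rintro k P ⟨S, hS, rfl⟩ Q ⟨T, hT, rfl⟩ hne x hx y hy
    obtain ⟨u, hu, rfl⟩ := hx
    obtain ⟨v, hv, rfl⟩ := hy
    have hST : S ≠ T := by rintro rfl; exact hne rfl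
    exact hVdisj k S hS T hT hST u hu v hv
  have hVbnd' : ∀ k, ∀ P ∈ 𝒱' k, ∀ x ∈ P, ∀ y ∈ P, dZ a x y ≤ c := by
    rintro k P ⟨S, hS, rfl⟩ x hx y hy
    obtain ⟨u, hu, rfl⟩ := hx
    obtain ⟨v, hv, rfl⟩ := hy
    exact le_trans (hVbnd k S hS u hu v hv) hB₂c
  set near : Set (Z a) → Set (Z a) → Prop := fun P Q => ∃ x ∈ P, ∃ y ∈ Q, dZ a x y ≤ r
    with hnear
  set sat : Fin (n+1) → Set (Z a) → Set (Z a) :=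
    fun k Q => Q ∪ ⋃₀ {P ∈ 𝒰' k | near P Q} with hsat
  set 𝒲' : Fin (n+1) → Set (Set (Z a)) := fun k =>
    {W | (∃ Q ∈ 𝒱' k, W = sat k Q) ∨ (W ∈ 𝒰' k ∧ ∀ Q ∈ 𝒱' k, ¬ near W Q)} with h𝒲'
  have hprox : ∀ k, ∀ Q ∈ 𝒱' k, ∀ x ∈ sat k Q, ∃ v ∈ Q, dZ a x v ≤ b + r := by
    intro k Q hQ x hx
    rcases hx with hx | hx
    · exact ⟨x, hx, by rw [drefl]; linarith⟩
    · obtain ⟨P, ⟨hP, hnr⟩, hxP⟩ := hx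
      obtain ⟨u, hu, v, hv, huv⟩ := hnr
      have h1 := hUbnd' k P hP x hxP u hu
      have h2 := dtri x u v
      exact ⟨v, hv, by linarith⟩
  -- core disjointness facts
  have hmix : ∀ k, ∀ Q ∈ 𝒱' k, ∀ P ∈ 𝒰' k, (∀ Q' ∈ 𝒱' k, ¬ near P Q') →
      ∀ x ∈ sat k Q, ∀ y ∈ P, r < dZ a x y := by
    intro k Q hQ P hP hfar x hx y hy
    rcases hx with hx | hx
    · by_contra h
      push_neg at h
      exact hfar Q hQ ⟨y, hy, x, hx, by rw [dsym y x]; linarith⟩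
    · obtain ⟨P', ⟨hP', hnr'⟩, hxP'⟩ := hx
      have hPP' : P' ≠ P := by rintro rfl; exact hfar Q hQ hnr'
      exact hUdisj' k P' hP' P hP hPP' x hxP' y hy
  have hWdisj : ∀ k, ∀ W₁ ∈ 𝒲' k, ∀ W₂ ∈ 𝒲' k, W₁ ≠ W₂ →
      ∀ x ∈ W₁, ∀ y ∈ W₂, r < dZ a x y := by
    intro k W₁ h₁ W₂ h₂ hne x hx y hy
    rcases h₁ with ⟨Q₁, hQ₁, rfl⟩ | ⟨hW₁U, hW₁far⟩
    · rcases h₂ with ⟨Q₂, hQ₂, rfl⟩ | ⟨hW₂U, hW₂far⟩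
      · have hQne : Q₁ ≠ Q₂ := by rintro rfl; exact hne rfl
        obtain ⟨v₁, hv₁, hxv₁⟩ := hprox k Q₁ hQ₁ x hx
        obtain ⟨v₂, hv₂, hyv₂⟩ := hprox k Q₂ hQ₂ y hy
        have hvv := hVdisj' k Q₁ hQ₁ Q₂ hQ₂ hQne v₁ hv₁ v₂ hv₂
        have t1 := dtri v₁ x v₂
        have t2 := dtri x y v₂
        have e1 := dsym v₁ x
        have e2 := dsym y v₂
        rw [hs] at hvv
        linarith
      · exact hmix k Q₁ hQ₁ W₂ hW₂U hW₂far x hx y hy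
    · rcases h₂ with ⟨Q₂, hQ₂, rfl⟩ | ⟨hW₂U, hW₂far⟩
      · rw [dsym x y]
        exact hmix k Q₂ hQ₂ W₁ hW₁U hW₁far y hy x hx
      · exact hUdisj' k W₁ hW₁U W₂ hW₂U hne x hx y hy
  have hWbnd : ∀ k, ∀ W ∈ 𝒲' k, ∀ x ∈ W, ∀ y ∈ W,
      dZ a x y ≤ max b (2 * b + 2 * r + c) := by
    intro k W hW x hx y hy
    rcases hW with ⟨Q, hQ, rfl⟩ | ⟨hWU, _⟩
    · obtain ⟨v₁, hv₁, hxv₁⟩ := hprox k Q hQ x hx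
      obtain ⟨v₂, hv₂, hyv₂⟩ := hprox k Q hQ y hy
      have h12 := hVbnd' k Q hQ v₁ hv₁ v₂ hv₂
      have t1 := dtri x v₁ y
      have t2 := dtri v₁ v₂ y
      have e := dsym v₂ y
      have hm : 2 * b + 2 * r + c ≤ max b (2 * b + 2 * r + c) := le_max_right _ _
      linarith
    · exact le_trans (hUbnd' k W hWU x hx y hy) (le_max_left _ _)
  have hWcov : ∀ z ∈ U a ∪ V a, ∃ k, ∃ W ∈ 𝒲' k, z ∈ W := by
    intro z hz
    rcases hz with hzU | hzV
    · obtain ⟨k, S, hS, hzS⟩ := hUcov ⟨z, hzU⟩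
      have hP : (iU S) ∈ 𝒰' k := ⟨S, hS, rfl⟩
      have hzP : z ∈ iU S := ⟨⟨z, hzU⟩, hzS, rfl⟩
      by_cases hn : ∃ Q ∈ 𝒱' k, near (iU S) Q
      · obtain ⟨Q, hQ, hnQ⟩ := hn
        exact ⟨k, sat k Q, Or.inl ⟨Q, hQ, rfl⟩, Or.inr ⟨iU S, ⟨hP, hnQ⟩, hzP⟩⟩
      · push_neg at hn
        exact ⟨k, iU S, Or.inr ⟨hP, hn⟩, hzP⟩
    · obtain ⟨k, T, hT, hzT⟩ := hVcov ⟨z, hzV⟩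
      exact ⟨k, sat k (iV T), Or.inl ⟨iV T, ⟨T, hT, rfl⟩, rfl⟩,
        Or.inl ⟨⟨z, hzV⟩, hzT, rfl⟩⟩
  refine ⟨fun k => (fun W => Subtype.val ⁻¹' W : Set (Z a) → Set ↥(U a ∪ V a)) '' 𝒲' k,
    ?_, ?_, ?_⟩
  · intro x
    obtain ⟨k, W, hW, hx⟩ := hWcov x.1 x.2
    exact ⟨k, _, ⟨W, hW, rfl⟩, hx⟩
  · rintro k _ ⟨W₁, hW₁, rfl⟩ _ ⟨W₂, hW₂, rfl⟩ hne x hx y hy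
    have hW : W₁ ≠ W₂ := by rintro rfl; exact hne rfl
    exact hWdisj k W₁ hW₁ W₂ hW₂ hW x.1 hx y.1 hy
  · rintro k _ ⟨W, hW, rfl⟩ x hx y hy
    exact hWbnd k W hW x.1 hx y.1 hy

/-- For a metric family `{U_α ∪ V_α}_{α ∈ A}` whose members are unions
of two subspaces, the uniform asymptotic dimension of `{U_α ∪ V_α}` equals the maximum of
the uniform asymptotic dimensions of `{U_α}` and `{V_α}`. -/
theorem uniformAsdim_union_eq_max
    (A : Type) (Z : A → Type) (dZ : ∀ a, Z a → Z a → ℝ)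
    (hZ : ∀ a, IsPseudoMetric (dZ a)) (U V : ∀ a, Set (Z a)) :
    uniformAsdim (fun a => ↥(U a ∪ V a)) (fun a x y => dZ a x.1 y.1) =
      max (uniformAsdim (fun a => ↥(U a)) (fun a x y => dZ a x.1 y.1))
        (uniformAsdim (fun a => ↥(V a)) (fun a x y => dZ a x.1 y.1)) := by
  classical
  rw [uniformAsdim, uniformAsdim, uniformAsdim]
  apply le_antisymm
  · by_cases h1 : {n : ℕ∞ | ∃ m : ℕ, n = (m : ℕ∞) ∧
        UniformAsdimLE (fun a => ↥(U a)) (fun a x y => dZ a x.1 y.1) m}.Nonempty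
    · by_cases h2 : {n : ℕ∞ | ∃ m : ℕ, n = (m : ℕ∞) ∧
          UniformAsdimLE (fun a => ↥(V a)) (fun a x y => dZ a x.1 y.1) m}.Nonempty
      · obtain ⟨m₁, he₁, hP₁⟩ := csInf_mem h1
        obtain ⟨m₂, he₂, hP₂⟩ := csInf_mem h2
        rw [he₁, he₂]
        have hP₁' := asdimLE_mono' (le_max_left m₁ m₂) hP₁
        have hP₂' := asdimLE_mono' (le_max_right m₁ m₂) hP₂
        have hW := asdimLE_union' hZ hP₁' hP₂'
        refine le_trans (sInf_le ⟨max m₁ m₂, rfl, hW⟩) ?_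
        simp [Nat.cast_max]
        exact le_total m₂ m₁
      · rw [Set.not_nonempty_iff_eq_empty] at h2
        rw [h2, sInf_empty]
        exact le_trans le_top (le_max_right _ _)
    · rw [Set.not_nonempty_iff_eq_empty] at h1
      rw [h1, sInf_empty]
      exact le_trans le_top (le_max_left _ _)
  · apply max_le
    · apply sInf_le_sInf
      rintro x ⟨m, rfl, hm⟩
      exact ⟨m, rfl, asdimLE_restrict' (fun a => Set.subset_union_left) hm⟩
    · apply sInf_le_sInf
      rintro x ⟨m, rfl, hm⟩
      exact ⟨m, rfl, asdimLE_restrict' (fun a => Set.subset_union_right) hm⟩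
end

section
/- Let n ∈ ℕ and let {X_{i,j}}_{j∈J, 0≤i≤n} be a metric family such that for each j ∈ J the spaces X_{0,j}, …, X_{n,j} are subspaces of a common metric space. Then the metric family {⋃_{i=0}^n X_{i,j}}_{j∈J} has finite decomposition complexity if and only if the family {X_{i,j}}_{j∈J, 0≤i≤n} has finite decomposition complexity. -/
open Matrix

/-- One metric family embeds in another if each member of the first isometrically
embeds into a member of the second. -/
def Embeds (F' F : MetricFamily) : Prop :=
  ∀ i' : F'.idx, ∃ i : F.idx, ∃ f : F'.spc i' → F.spc i,
    ∀ x y, F.dist i (f x) (f y) = F'.dist i' x y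

lemma FDCClass_zero (F : MetricFamily) : FDCClass 0 F ↔ F.Bounded := by
  unfold FDCClass
  rw [Ordinal.limitRecOn_zero]

lemma FDCClass_succ (γ : Ordinal) (F : MetricFamily) :
    FDCClass (Order.succ γ) F ↔ F.DecomposesOver (FDCClass γ) := by
  unfold FDCClass
  rw [Ordinal.limitRecOn_succ]

lemma FDCClass_limit {γ : Ordinal} (h : Order.IsSuccLimit γ) (F : MetricFamily) :
    FDCClass γ F ↔ ∃ β, ∃ _ : β < γ, FDCClass β F := by
  unfold FDCClass
  rw [Ordinal.limitRecOn_limit _ _ _ _ h]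

lemma embeds_ofPieces {F F' : MetricFamily} (ι : F'.idx → F.idx)
    (f : ∀ i', F'.spc i' → F.spc (ι i'))
    (hf : ∀ i' x y, F.dist (ι i') (f i' x) (f i' y) = F'.dist i' x y)
    (𝒰 : ∀ i, Set (Set (F.spc i))) :
    Embeds (F'.ofPieces fun i' => (f i' ⁻¹' ·) '' 𝒰 (ι i')) (F.ofPieces 𝒰) := by
  rintro ⟨i', U', hU'⟩
  obtain ⟨U, hU, rfl⟩ := hU'
  exact ⟨⟨ι i', ⟨U, hU⟩⟩, fun x => ⟨f i' x.1, x.2⟩, fun x y => hf i' x.1 y.1⟩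

lemma FDCClass_of_embeds : ∀ (γ : Ordinal) (F F' : MetricFamily),
    Embeds F' F → FDCClass γ F → FDCClass γ F' := by
  intro γ
  induction γ using Ordinal.induction with
  | _ γ IH =>
  intro F F' hE h
  rcases Ordinal.zero_or_succ_or_isSuccLimit γ with rfl | ⟨β, rfl⟩ | hγ
  · rw [FDCClass_zero] at h ⊢
    obtain ⟨B, hB⟩ := h
    choose ι f hf using hE
    exact ⟨B, fun i x y => hf i x y ▸ hB (ι i) (f i x) (f i y)⟩
  · rw [FDCClass_succ] at h ⊢
    choose ι f hf using hE
    intro r hr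
    obtain ⟨𝒰, 𝒱, hcov, hdU, hdV, hDU, hDV⟩ := h r hr
    refine ⟨fun i' => (f i' ⁻¹' ·) '' 𝒰 (ι i'), fun i' => (f i' ⁻¹' ·) '' 𝒱 (ι i'),
      ?_, ?_, ?_, ?_, ?_⟩
    · intro i' x
      rcases hcov (ι i') (f i' x) with ⟨S, hS, hx⟩ | ⟨S, hS, hx⟩
      · exact Or.inl ⟨_, Set.mem_image_of_mem _ hS, hx⟩
      · exact Or.inr ⟨_, Set.mem_image_of_mem _ hS, hx⟩
    · rintro i' _ ⟨U, hU, rfl⟩ _ ⟨V, hV, rfl⟩ hne x hx y hy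
      rw [← hf i' x y]
      exact hdU (ι i') U hU V hV (fun h => hne (by rw [h])) _ hx _ hy
    · rintro i' _ ⟨U, hU, rfl⟩ _ ⟨V, hV, rfl⟩ hne x hx y hy
      rw [← hf i' x y]
      exact hdV (ι i') U hU V hV (fun h => hne (by rw [h])) _ hx _ hy
    · exact IH β (Order.lt_succ β) _ _ (embeds_ofPieces ι f hf 𝒰) hDU
    · exact IH β (Order.lt_succ β) _ _ (embeds_ofPieces ι f hf 𝒱) hDV
  · rw [FDCClass_limit hγ] at h ⊢
    obtain ⟨β, hβ, h⟩ := h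
    exact ⟨β, hβ, IH β hβ _ _ hE h⟩

lemma HasFDC.embeds {F F' : MetricFamily} (hE : Embeds F' F) (h : HasFDC F) :
    HasFDC F' :=
  ⟨h.choose, FDCClass_of_embeds _ _ _ hE h.choose_spec⟩

lemma MetricFamily.DecomposesOver.mono {F : MetricFamily} {D D' : MetricFamily → Prop}
    (h : ∀ P, D P → D' P) (hd : F.DecomposesOver D) : F.DecomposesOver D' := by
  intro r hr
  obtain ⟨𝒰, 𝒱, h1, h2, h3, h4, h5⟩ := hd r hr
  exact ⟨𝒰, 𝒱, h1, h2, h3, h _ h4, h _ h5⟩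

lemma FDCClass_decomposes : ∀ (γ : Ordinal) (F : MetricFamily),
    FDCClass γ F → F.DecomposesOver (FDCClass γ) := by
  intro γ
  induction γ using Ordinal.induction with
  | _ γ IH =>
  intro F h
  rcases Ordinal.zero_or_succ_or_isSuccLimit γ with rfl | ⟨β, rfl⟩ | hγ
  · rw [FDCClass_zero] at h
    obtain ⟨B, hB⟩ := h
    intro r hr
    refine ⟨fun _ => {Set.univ}, fun _ => ∅,
      fun i x => Or.inl ⟨Set.univ, rfl, trivial⟩, ?_, ?_, ?_, ?_⟩
    · intro i U hU V hV hne
      rw [Set.mem_singleton_iff] at hU hV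
      subst hU; subst hV
      exact absurd rfl hne
    · intro i U hU
      exact absurd hU (Set.notMem_empty U)
    · rw [FDCClass_zero]
      exact ⟨B, fun q x y => hB q.1 x.1 y.1⟩
    · rw [FDCClass_zero]
      exact ⟨0, fun q => absurd q.2.2 (Set.notMem_empty _)⟩
  · rw [FDCClass_succ] at h
    intro r hr
    obtain ⟨𝒰, 𝒱, h1, h2, h3, h4, h5⟩ := h r hr
    refine ⟨𝒰, 𝒱, h1, h2, h3, ?_, ?_⟩
    · rw [FDCClass_succ]
      exact IH β (Order.lt_succ β) _ h4
    · rw [FDCClass_succ]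
      exact IH β (Order.lt_succ β) _ h5
  · rw [FDCClass_limit hγ] at h
    obtain ⟨β, hβ, hFβ⟩ := h
    exact (IH β hβ F hFβ).mono fun P hP => (FDCClass_limit hγ P).mpr ⟨β, hβ, hP⟩

lemma FDCClass_mono : ∀ (δ γ : Ordinal), γ ≤ δ → ∀ F, FDCClass γ F → FDCClass δ F := by
  intro δ
  induction δ using Ordinal.induction with
  | _ δ IH =>
  intro γ hγδ F h
  rcases eq_or_lt_of_le hγδ with rfl | hlt
  · exact h
  rcases Ordinal.zero_or_succ_or_isSuccLimit δ with rfl | ⟨β, rfl⟩ | hδ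
  · exact absurd hlt (not_lt_zero (a := γ))
  · rw [FDCClass_succ]
    exact FDCClass_decomposes β F (IH β (Order.lt_succ β) γ (Order.lt_succ_iff.mp hlt) F h)
  · rw [FDCClass_limit hδ]
    exact ⟨γ, hlt, h⟩

lemma hasFDC_of_two_cover (F : MetricFamily) (A B : ∀ i, Set (F.spc i))
    (hcov : ∀ i x, x ∈ A i ∨ x ∈ B i)
    (hA : HasFDC (F.ofPieces fun i => {A i}))
    (hB : HasFDC (F.ofPieces fun i => {B i})) : HasFDC F := by
  obtain ⟨γ₁, h₁⟩ := hA
  obtain ⟨γ₂, h₂⟩ := hB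
  refine ⟨Order.succ (max γ₁ γ₂), ?_⟩
  rw [FDCClass_succ]
  intro r hr
  refine ⟨fun i => {A i}, fun i => {B i}, ?_, ?_, ?_, ?_, ?_⟩
  · intro i x
    rcases hcov i x with h | h
    · exact Or.inl ⟨A i, rfl, h⟩
    · exact Or.inr ⟨B i, rfl, h⟩
  · intro i U hU V hV hne
    rw [Set.mem_singleton_iff] at hU hV
    subst hU; subst hV; exact absurd rfl hne
  · intro i U hU V hV hne
    rw [Set.mem_singleton_iff] at hU hV
    subst hU; subst hV; exact absurd rfl hne
  · exact FDCClass_mono _ γ₁ (le_max_left _ _) _ h₁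
  · exact FDCClass_mono _ γ₂ (le_max_right _ _) _ h₂

lemma union_hasFDC (J : Type) (Z : J → Type) (dZ : ∀ j, Z j → Z j → ℝ) :
    ∀ (m : ℕ) (T : ∀ j, Fin (m + 1) → Set (Z j)),
    HasFDC ⟨J × Fin (m + 1), fun p => ↥(T p.1 p.2), fun p x y => dZ p.1 x.1 y.1⟩ →
    HasFDC ⟨J, fun j => ↥(⋃ i, T j i), fun j x y => dZ j x.1 y.1⟩ := by
  intro m
  induction m with
  | zero =>
    intro T h
    have hE : Embeds ⟨J, fun j => ↥(⋃ i, T j i), fun j x y => dZ j x.1 y.1⟩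
        ⟨J × Fin 1, fun p => ↥(T p.1 p.2), fun p x y => dZ p.1 x.1 y.1⟩ := by
      intro j
      refine ⟨(j, 0), fun x => ⟨x.1, ?_⟩, fun x y => rfl⟩
      obtain ⟨i, hi⟩ := Set.mem_iUnion.mp x.2
      have hi0 : i = 0 := Fin.fin_one_eq_zero i
      rw [hi0] at hi
      exact hi
    exact h.embeds hE
  | succ m IH =>
    intro T h
    have hA : HasFDC ⟨J, fun j => ↥(⋃ i : Fin (m + 1), T j i.castSucc),
        fun j x y => dZ j x.1 y.1⟩ := by
      refine IH (fun j i => T j i.castSucc) (h.embeds ?_)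
      exact fun p => ⟨(p.1, p.2.castSucc), fun x => x, fun x y => rfl⟩
    set F : MetricFamily :=
      ⟨J, fun j => ↥(⋃ i, T j i), fun j x y => dZ j x.1 y.1⟩ with hF
    set A : ∀ j : J, Set (F.spc j) :=
      fun j => {x : ↥(⋃ i, T j i) | x.1 ∈ ⋃ i : Fin (m + 1), T j i.castSucc} with hAdef
    set B : ∀ j : J, Set (F.spc j) :=
      fun j => {x : ↥(⋃ i, T j i) | x.1 ∈ T j (Fin.last (m + 1))} with hBdef
    refine hasFDC_of_two_cover F A B ?_ ?_ ?_
    · intro j x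
      obtain ⟨i, hi⟩ := Set.mem_iUnion.mp x.2
      rcases Fin.eq_castSucc_or_eq_last i with ⟨i', rfl⟩ | rfl
      · exact Or.inl (Set.mem_iUnion.mpr ⟨i', hi⟩)
      · exact Or.inr hi
    · have hE : Embeds (F.ofPieces fun j => {A j})
          ⟨J, fun j => ↥(⋃ i : Fin (m + 1), T j i.castSucc),
            fun j x y => dZ j x.1 y.1⟩ := by
        intro q
        refine ⟨q.1, fun x => ⟨x.1.1, ?_⟩, fun x y => rfl⟩
        have hq := q.2.2
        rw [Set.mem_singleton_iff] at hq
        exact hq.le x.2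
      exact hA.embeds hE
    · have hE : Embeds (F.ofPieces fun j => {B j})
          ⟨J × Fin (m + 2), fun p => ↥(T p.1 p.2), fun p x y => dZ p.1 x.1 y.1⟩ := by
        intro q
        refine ⟨(q.1, Fin.last (m + 1)), fun x => ⟨x.1.1, ?_⟩, fun x y => rfl⟩
        have hq := q.2.2
        rw [Set.mem_singleton_iff] at hq
        exact hq.le x.2
      exact h.embeds hE

/-- Let `{X_{i,j}}_{j ∈ J, 0 ≤ i ≤ n}` be a metric family such that for
each `j` the spaces `X_{0,j}, …, X_{n,j}` are subspaces of a common metric space. Then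
the family `{⋃_{i=0}^n X_{i,j}}_{j ∈ J}` has finite decomposition complexity if and only
if the family `{X_{i,j}}_{j ∈ J, 0 ≤ i ≤ n}` does. -/
theorem hasFDC_finite_union_iff
    (J : Type) (n : ℕ) (Z : J → Type) (dZ : ∀ j, Z j → Z j → ℝ)
    (hZ : ∀ j, IsPseudoMetric (dZ j)) (S : ∀ j, Fin (n + 1) → Set (Z j)) :
    HasFDC ⟨J, fun j => ↥(⋃ i, S j i), fun j x y => dZ j x.1 y.1⟩ ↔
      HasFDC ⟨J × Fin (n + 1), fun p => ↥(S p.1 p.2), fun p x y => dZ p.1 x.1 y.1⟩ := by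
  constructor
  · intro h
    have hE : Embeds
        ⟨J × Fin (n + 1), fun p => ↥(S p.1 p.2), fun p x y => dZ p.1 x.1 y.1⟩
        ⟨J, fun j => ↥(⋃ i, S j i), fun j x y => dZ j x.1 y.1⟩ :=
      fun p => ⟨p.1, fun x => ⟨x.1, Set.mem_iUnion.mpr ⟨p.2, x.2⟩⟩, fun x y => rfl⟩
    exact h.embeds hE
  · intro h
    exact union_hasFDC J Z dZ n S h
end
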